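/- arXiv:1802.02770 — 4 statements merged into one kernel-verified Lean document; each statement's English description precedes it below -/
import Mathlib

section
/- For all real numbers s and t with t > 0 and s > 1 + t, the series ∑_{n≥1} R(n)^t · ln n / n^s converges and equals S(s,t) · ∑_{n≥1} R(n)^t / n^s. -/
open scoped BigOperators

/-- The radical of a natural number: the product of its distinct prime factors. -/
def rad (n : ℕ) : ℕ := ∏ p ∈ n.primeFactors, p

/-- `S s t = ∑_p (p^s/(p^s − 1)) · (p^t/(p^s − 1 + p^t)) · ln p` over all primes `p`. -/
noncomputable def S (s t : ℝ) : ℝ :=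
  ∑' p : Nat.Primes, (((p : ℕ) : ℝ) ^ s / (((p : ℕ) : ℝ) ^ s - 1)) *
    (((p : ℕ) : ℝ) ^ t / (((p : ℕ) : ℝ) ^ s - 1 + ((p : ℕ) : ℝ) ^ t)) *
    Real.log ((p : ℕ) : ℝ)

/-- `T s t = ∑_p (p^t/(p^s − 1 + p^t)) · ln p` over all primes `p`. -/
noncomputable def T (s t : ℝ) : ℝ :=
  ∑' p : Nat.Primes, (((p : ℕ) : ℝ) ^ t / (((p : ℕ) : ℝ) ^ s - 1 + ((p : ℕ) : ℝ) ^ t)) *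
    Real.log ((p : ℕ) : ℝ)

namespace StmtAux

open Real

/-- the summand -/
noncomputable def ff (s t : ℝ) (n : ℕ+) : ℝ := (rad n : ℝ) ^ t / ((n : ℕ) : ℝ) ^ s

lemma ff_nonneg (s t : ℝ) (n : ℕ+) : 0 ≤ ff s t n := by
  unfold ff; positivity

lemma rad_le (n : ℕ+) : rad n ≤ (n : ℕ) :=
  Nat.le_of_dvd n.pos (Nat.prod_primeFactors_dvd _)

lemma summable_pnat_of_nat {g : ℕ → ℝ} (hg : Summable g) :
    Summable (fun n : ℕ+ => g (n : ℕ)) :=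
  hg.comp_injective PNat.coe_injective

/-- Summability of `n^(t-s) * log n`-type series over ℕ+. -/
lemma summable_ff_log (s t : ℝ) (ht : 0 < t) (hs : 1 + t < s) :
    Summable (fun n : ℕ+ => ff s t n * Real.log (n : ℕ)) := by
  set ε : ℝ := (s - t - 1) / 2 with hε
  have hε0 : 0 < ε := by rw [hε]; linarith
  have hexp : t + ε - s < -1 := by rw [hε]; linarith
  have hmaj : Summable (fun n : ℕ => ε⁻¹ * ((n : ℝ) ^ (t + ε - s))) :=
    (Real.summable_nat_rpow.mpr hexp).mul_left _
  apply Summable.of_nonneg_of_le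
    (fun n => mul_nonneg (ff_nonneg s t n) (Real.log_nonneg (by exact_mod_cast n.one_le)))
    (fun n => ?_) (summable_pnat_of_nat hmaj)
  have hn1 : (1 : ℝ) ≤ (n : ℕ) := by exact_mod_cast n.one_le
  have hn0 : (0 : ℝ) < (n : ℕ) := by linarith
  have hrad : (rad n : ℝ) ^ t ≤ ((n : ℕ) : ℝ) ^ t := by
    apply Real.rpow_le_rpow (by positivity) _ ht.le
    exact_mod_cast rad_le n
  have hlog : Real.log (n : ℕ) ≤ ((n : ℕ) : ℝ) ^ ε / ε :=
    Real.log_le_rpow_div (by positivity) hε0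
  have hlog0 : 0 ≤ Real.log ((n : ℕ) : ℝ) := Real.log_nonneg hn1
  calc ff s t n * Real.log (n : ℕ)
      ≤ (((n : ℕ) : ℝ) ^ t / ((n : ℕ) : ℝ) ^ s) * (((n : ℕ) : ℝ) ^ ε / ε) := by
        apply mul_le_mul _ hlog hlog0 (by positivity)
        exact div_le_div_of_nonneg_right hrad (by positivity) |>.trans_eq rfl
    _ = ε⁻¹ * ((n : ℕ) : ℝ) ^ (t + ε - s) := by
        rw [Real.rpow_sub hn0, Real.rpow_add hn0]
        field_simp

lemma summable_ff (s t : ℝ) (ht : 0 < t) (hs : 1 + t < s) :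
    Summable (ff s t) := by
  have hexp : t - s < -1 := by linarith
  have hmaj : Summable (fun n : ℕ => (n : ℝ) ^ (t - s)) := Real.summable_nat_rpow.mpr hexp
  apply Summable.of_nonneg_of_le (fun n => ff_nonneg s t n) (fun n => ?_)
    (summable_pnat_of_nat hmaj)
  have hn1 : (1 : ℝ) ≤ (n : ℕ) := by exact_mod_cast n.one_le
  have hn0 : (0 : ℝ) < (n : ℕ) := by linarith
  have hrad : (rad n : ℝ) ^ t ≤ ((n : ℕ) : ℝ) ^ t := by
    apply Real.rpow_le_rpow (by positivity) _ ht.le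
    exact_mod_cast rad_le n
  calc ff s t n ≤ ((n : ℕ) : ℝ) ^ t / ((n : ℕ) : ℝ) ^ s :=
        div_le_div_of_nonneg_right hrad (by positivity) |>.trans_eq rfl
    _ = ((n : ℕ) : ℝ) ^ (t - s) := by rw [Real.rpow_sub hn0]

end StmtAux

namespace StmtAux2

open Real StmtAux

variable {p : ℕ}

/-- splitting off the `p`-part of a positive natural number -/
def pSplit (p : ℕ) (hp : p.Prime) : ℕ × {m : ℕ+ // ¬ p ∣ (m : ℕ)} ≃ ℕ+ where
  toFun q := ⟨p ^ q.1 * (q.2.1 : ℕ), by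
    have := q.2.1.pos
    have := hp.pos
    positivity⟩
  invFun n := ⟨(n : ℕ).factorization p,
    ⟨⟨ordCompl[p] (n : ℕ), Nat.ordCompl_pos p n.pos.ne'⟩,
      Nat.not_dvd_ordCompl hp n.pos.ne'⟩⟩
  left_inv := by
    rintro ⟨a, ⟨m, hm⟩⟩
    have hm0 : (m : ℕ) ≠ 0 := m.pos.ne'
    have hfac : (p ^ a * (m : ℕ)).factorization p = a := by
      rw [Nat.factorization_mul (pow_ne_zero _ hp.pos.ne') hm0]
      simp [hp.factorization_pow, Nat.factorization_eq_zero_of_not_dvd hm]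
    have hord : ordCompl[p] (p ^ a * (m : ℕ)) = (m : ℕ) := by
      rw [hfac]
      exact Nat.mul_div_cancel_left _ (pow_pos hp.pos a)
    exact Prod.ext hfac (Subtype.ext (PNat.coe_injective hord))
  right_inv := by
    intro n
    exact PNat.coe_injective (Nat.ordProj_mul_ordCompl_eq_self (n : ℕ) p)

lemma pSplit_coe (hp : p.Prime) (q : ℕ × {m : ℕ+ // ¬ p ∣ (m : ℕ)}) :
    ((pSplit p hp q : ℕ+) : ℕ) = p ^ q.1 * (q.2.1 : ℕ) := rfl

lemma factorization_pSplit (hp : p.Prime) (q : ℕ × {m : ℕ+ // ¬ p ∣ (m : ℕ)}) :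
    ((pSplit p hp q : ℕ+) : ℕ).factorization p = q.1 := by
  rw [pSplit_coe hp]
  rw [Nat.factorization_mul (pow_ne_zero _ hp.pos.ne') q.2.1.pos.ne']
  simp [hp.factorization_pow, Nat.factorization_eq_zero_of_not_dvd q.2.2]

/-- the local weight -/
noncomputable def w (s t : ℝ) (p : ℕ) (a : ℕ) : ℝ :=
  if a = 0 then 1 else (p : ℝ) ^ t * (((p : ℝ) ^ s)⁻¹) ^ a

lemma rad_p_mul {a : ℕ} (hp : p.Prime) (ha : a ≠ 0) {m : ℕ} (hm0 : m ≠ 0)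
    (hm : ¬ p ∣ m) : rad (p ^ a * m) = p * rad m := by
  unfold rad
  rw [Nat.primeFactors_mul (pow_ne_zero _ hp.pos.ne') hm0,
    Nat.primeFactors_prime_pow ha hp]
  rw [Finset.prod_union (by
    simp only [Finset.disjoint_singleton_left]
    intro hmem
    exact hm (Nat.dvd_of_mem_primeFactors hmem))]
  simp

lemma ff_split (s t : ℝ) (ht : 0 < t) (hp : p.Prime)
    (q : ℕ × {m : ℕ+ // ¬ p ∣ (m : ℕ)}) :
    ff s t (pSplit p hp q) = w s t p q.1 * ff s t q.2.1 := by
  obtain ⟨a, ⟨m, hm⟩⟩ := q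
  have hp1 : (1 : ℝ) < (p : ℝ) := by exact_mod_cast hp.one_lt
  have hp0 : (0 : ℝ) < (p : ℝ) := by linarith
  have hm0 : (0 : ℝ) < ((m : ℕ) : ℝ) := by exact_mod_cast m.pos
  rcases eq_or_ne a 0 with rfl | ha
  · have he : pSplit p hp (0, ⟨m, hm⟩) = m := PNat.coe_injective (by simp [pSplit_coe])
    simp [he, w]
  · unfold ff
    rw [pSplit_coe hp]
    simp only
    rw [rad_p_mul hp ha m.pos.ne' hm]
    rw [w, if_neg ha]
    push_cast
    rw [Real.mul_rpow hp0.le (by positivity), Real.mul_rpow (by positivity) hm0.le]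
    have hpow : ((p : ℝ) ^ (a : ℕ)) ^ s = ((p : ℝ) ^ s) ^ (a : ℕ) := by
      rw [← Real.rpow_natCast (p : ℝ) a, ← Real.rpow_mul hp0.le, mul_comm,
        Real.rpow_mul hp0.le, Real.rpow_natCast]
    rw [hpow]
    have h1 : ((p : ℝ) ^ s) ^ (a : ℕ) ≠ 0 := by positivity
    have h2 : ((m : ℕ) : ℝ) ^ s ≠ 0 := by positivity
    field_simp
    rw [one_div, inv_pow, mul_assoc, mul_inv_cancel₀ h1, mul_one]

end StmtAux2

section Sums

open Real StmtAux

lemma tsum_mul_tsum_nonneg {α β : Type*} {u : α → ℝ} {v : β → ℝ}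
    (hu0 : ∀ a, 0 ≤ u a) (hv0 : ∀ b, 0 ≤ v b) (hu : Summable u) (hv : Summable v) :
    Summable (fun q : α × β => u q.1 * v q.2) ∧
      (∑' q : α × β, u q.1 * v q.2) = (∑' a, u a) * (∑' b, v b) := by
  have hsum : Summable (fun q : α × β => u q.1 * v q.2) :=
    hu.mul_of_nonneg hv hu0 hv0
  exact ⟨hsum, (Summable.tsum_mul_tsum hu hv hsum).symm⟩

variable {p : ℕ} {s t : ℝ}

lemma y_lt (hp : p.Prime) (hs0 : 0 < s) : 1 < (p : ℝ) ^ s := by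
  have : (1 : ℝ) < (p : ℝ) := by exact_mod_cast hp.one_lt
  rw [Real.one_lt_rpow_iff_of_pos (by linarith)]
  exact Or.inl ⟨this, hs0⟩

lemma w_nonneg (s t : ℝ) (p a : ℕ) : 0 ≤ StmtAux2.w s t p a := by
  unfold StmtAux2.w
  split <;> positivity

lemma w_eq (s t : ℝ) (p : ℕ) : StmtAux2.w s t p =
    fun a : ℕ => (p : ℝ) ^ t * ((((p : ℝ) ^ s)⁻¹) ^ a) +
      (if a = 0 then (1 : ℝ) - (p : ℝ) ^ t else 0) := by
  funext a
  rcases eq_or_ne a 0 with rfl | ha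
  · simp [StmtAux2.w]
  · simp [StmtAux2.w, ha]

lemma summable_w (hp : p.Prime) (hs0 : 0 < s) : Summable (StmtAux2.w s t p) := by
  have hy := y_lt hp hs0
  have hx0 : (0 : ℝ) ≤ (((p : ℝ) ^ s)⁻¹) := by positivity
  have hx1 : (((p : ℝ) ^ s)⁻¹) < 1 := inv_lt_one_of_one_lt₀ hy
  rw [w_eq]
  refine Summable.add ((summable_geometric_of_lt_one hx0 hx1).mul_left _) ?_
  apply summable_of_finite_support
  apply Set.Finite.subset (Set.finite_singleton 0)
  intro a ha
  simp only [Function.mem_support] at ha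
  by_contra h
  simp only [Set.mem_singleton_iff] at h
  exact ha (by simp [h])

lemma tsum_w (hp : p.Prime) (hs0 : 0 < s) :
    (∑' a, StmtAux2.w s t p a) =
      ((p : ℝ) ^ s - 1 + (p : ℝ) ^ t) / ((p : ℝ) ^ s - 1) := by
  have hy := y_lt hp hs0
  have hx0 : (0 : ℝ) ≤ (((p : ℝ) ^ s)⁻¹) := by positivity
  have hx1 : (((p : ℝ) ^ s)⁻¹) < 1 := inv_lt_one_of_one_lt₀ hy
  rw [w_eq]
  rw [Summable.tsum_add ((summable_geometric_of_lt_one hx0 hx1).mul_left _)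
    (by
      apply summable_of_finite_support
      apply Set.Finite.subset (Set.finite_singleton 0)
      intro a ha
      simp only [Function.mem_support] at ha
      by_contra h
      simp only [Set.mem_singleton_iff] at h
      exact ha (by simp [h]))]
  rw [tsum_mul_left, tsum_geometric_of_lt_one hx0 hx1, tsum_ite_eq]
  have h0 : (p : ℝ) ^ s ≠ 0 := by positivity
  have h1 : (p : ℝ) ^ s - 1 ≠ 0 := by linarith
  field_simp
  ring

lemma aw_eq (s t : ℝ) (p : ℕ) : (fun a : ℕ => (a : ℝ) * StmtAux2.w s t p a) =
    fun a : ℕ => (p : ℝ) ^ t * ((a : ℝ) * (((p : ℝ) ^ s)⁻¹) ^ a) := by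
  funext a
  rcases eq_or_ne a 0 with rfl | ha
  · simp [StmtAux2.w]
  · simp only [StmtAux2.w, if_neg ha]
    ring

lemma summable_aw (hp : p.Prime) (hs0 : 0 < s) :
    Summable (fun a : ℕ => (a : ℝ) * StmtAux2.w s t p a) := by
  have hy := y_lt hp hs0
  have hx1 : ‖(((p : ℝ) ^ s)⁻¹)‖ < 1 := by
    rw [Real.norm_eq_abs, abs_of_nonneg (by positivity)]
    exact inv_lt_one_of_one_lt₀ hy
  rw [aw_eq]
  exact (hasSum_coe_mul_geometric_of_norm_lt_one hx1).summable.mul_left _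

lemma tsum_aw (hp : p.Prime) (hs0 : 0 < s) :
    (∑' a : ℕ, (a : ℝ) * StmtAux2.w s t p a) =
      (p : ℝ) ^ t * (p : ℝ) ^ s / ((p : ℝ) ^ s - 1) ^ 2 := by
  have hy := y_lt hp hs0
  have hx1 : ‖(((p : ℝ) ^ s)⁻¹)‖ < 1 := by
    rw [Real.norm_eq_abs, abs_of_nonneg (by positivity)]
    exact inv_lt_one_of_one_lt₀ hy
  rw [aw_eq]
  rw [tsum_mul_left, tsum_coe_mul_geometric_of_norm_lt_one hx1]
  have h0 : (p : ℝ) ^ s ≠ 0 := by positivity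
  have h1 : (p : ℝ) ^ s - 1 ≠ 0 := by linarith
  field_simp

end Sums

namespace StmtAux3

open Real StmtAux StmtAux2

variable {s t : ℝ} {p : ℕ}

lemma summable_ff_sub (ht : 0 < t) (hs : 1 + t < s) (p : ℕ) :
    Summable (fun m : {m : ℕ+ // ¬ p ∣ (m : ℕ)} => ff s t m.1) :=
  (summable_ff s t ht hs).subtype _

lemma ff_sub_nonneg (s t : ℝ) (p : ℕ) :
    ∀ m : {m : ℕ+ // ¬ p ∣ (m : ℕ)}, 0 ≤ ff s t m.1 := fun m => ff_nonneg s t m.1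

lemma tsum_ff_eq (ht : 0 < t) (hs : 1 + t < s) (hp : p.Prime) :
    (∑' n : ℕ+, ff s t n) =
      (((p : ℝ) ^ s - 1 + (p : ℝ) ^ t) / ((p : ℝ) ^ s - 1)) *
        ∑' m : {m : ℕ+ // ¬ p ∣ (m : ℕ)}, ff s t m.1 := by
  have hs0 : 0 < s := by linarith
  rw [← Equiv.tsum_eq (pSplit p hp) (ff s t)]
  calc (∑' q : ℕ × {m : ℕ+ // ¬ p ∣ (m : ℕ)}, ff s t (pSplit p hp q))
      = ∑' q : ℕ × {m : ℕ+ // ¬ p ∣ (m : ℕ)}, w s t p q.1 * ff s t q.2.1 :=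
        tsum_congr (ff_split s t ht hp)
    _ = (∑' a, w s t p a) * ∑' m : {m : ℕ+ // ¬ p ∣ (m : ℕ)}, ff s t m.1 :=
        (tsum_mul_tsum_nonneg (w_nonneg s t p) (ff_sub_nonneg s t p)
          (summable_w hp hs0) (summable_ff_sub ht hs p)).2
    _ = _ := by rw [tsum_w hp hs0]

lemma nu_comp_eq (ht : 0 < t) (hp : p.Prime) :
    (fun q : ℕ × {m : ℕ+ // ¬ p ∣ (m : ℕ)} =>
        ((((pSplit p hp q : ℕ+) : ℕ).factorization p : ℝ) * ff s t (pSplit p hp q)))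
      = fun q => ((q.1 : ℝ) * w s t p q.1) * ff s t q.2.1 := by
  funext q
  rw [factorization_pSplit hp, ff_split s t ht hp]
  ring

set_option maxHeartbeats 1000000 in
lemma summable_nu_ff (ht : 0 < t) (hs : 1 + t < s) (hp : p.Prime) :
    Summable (fun n : ℕ+ => (((n : ℕ).factorization p : ℝ) * ff s t n)) := by
  have hs0 : 0 < s := by linarith
  refine (Equiv.summable_iff (pSplit p hp)).mp
    (Summable.congr ?_ (fun q => (congrFun (nu_comp_eq (s := s) ht hp) q).symm))
  exact (summable_aw hp hs0).mul_of_nonneg (summable_ff_sub ht hs p)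
    (fun a => mul_nonneg (Nat.cast_nonneg a) (w_nonneg s t p a)) (ff_sub_nonneg s t p)

lemma tsum_nu_ff (ht : 0 < t) (hs : 1 + t < s) (hp : p.Prime) :
    (∑' n : ℕ+, ((n : ℕ).factorization p : ℝ) * ff s t n) =
      ((p : ℝ) ^ t * (p : ℝ) ^ s / ((p : ℝ) ^ s - 1) ^ 2) *
        ∑' m : {m : ℕ+ // ¬ p ∣ (m : ℕ)}, ff s t m.1 := by
  have hs0 : 0 < s := by linarith
  rw [← Equiv.tsum_eq (pSplit p hp)
    (fun n : ℕ+ => ((n : ℕ).factorization p : ℝ) * ff s t n)]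
  calc (∑' q : ℕ × {m : ℕ+ // ¬ p ∣ (m : ℕ)},
        (((pSplit p hp q : ℕ+) : ℕ).factorization p : ℝ) * ff s t (pSplit p hp q))
      = ∑' q : ℕ × {m : ℕ+ // ¬ p ∣ (m : ℕ)},
          ((q.1 : ℝ) * w s t p q.1) * ff s t q.2.1 := by
        exact tsum_congr (fun q => congrFun (nu_comp_eq ht hp) q)
    _ = (∑' a : ℕ, (a : ℝ) * w s t p a) *
          ∑' m : {m : ℕ+ // ¬ p ∣ (m : ℕ)}, ff s t m.1 :=
        (tsum_mul_tsum_nonneg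
          (fun a => mul_nonneg (Nat.cast_nonneg a) (w_nonneg s t p a))
          (ff_sub_nonneg s t p) (summable_aw hp hs0) (summable_ff_sub ht hs p)).2
    _ = _ := by rw [tsum_aw hp hs0]

/-- the key per-prime identity -/
lemma per_prime (ht : 0 < t) (hs : 1 + t < s) (hp : p.Prime) :
    (∑' n : ℕ+, ((n : ℕ).factorization p : ℝ) * Real.log p * ff s t n) =
      ((p : ℝ) ^ s / ((p : ℝ) ^ s - 1)) *
        ((p : ℝ) ^ t / ((p : ℝ) ^ s - 1 + (p : ℝ) ^ t)) * Real.log p *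
        ∑' n : ℕ+, ff s t n := by
  have hs0 : 0 < s := by linarith
  have hy := y_lt hp hs0
  have hc : (0 : ℝ) < (p : ℝ) ^ t := by
    have : (0 : ℝ) < (p : ℝ) := by exact_mod_cast hp.pos
    positivity
  have h1 : (p : ℝ) ^ s - 1 ≠ 0 := by linarith
  have h2 : (p : ℝ) ^ s - 1 + (p : ℝ) ^ t ≠ 0 := by nlinarith
  have e1 : (fun n : ℕ+ => ((n : ℕ).factorization p : ℝ) * Real.log p * ff s t n)
      = fun n : ℕ+ => (((n : ℕ).factorization p : ℝ) * ff s t n) * Real.log p := by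
    funext n; ring
  rw [e1, tsum_mul_right, tsum_nu_ff ht hs hp, tsum_ff_eq ht hs hp]
  field_simp

end StmtAux3

namespace StmtAux4

open Real StmtAux StmtAux2 StmtAux3

variable {s t : ℝ}

lemma log_pnat (n : ℕ+) : Real.log ((n : ℕ) : ℝ) =
    ∑ q ∈ (n : ℕ).primeFactors, ((n : ℕ).factorization q : ℝ) * Real.log q := by
  conv_lhs => rw [← Nat.factorization_prod_pow_eq_self n.pos.ne']
  rw [Finsupp.prod]
  push_cast
  rw [Real.log_prod (fun q hq => by
    have hq' : q.Prime := Nat.prime_of_mem_primeFactors hq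
    have : (0 : ℝ) < (q : ℝ) := by exact_mod_cast hq'.pos
    positivity)]
  exact Finset.sum_congr rfl (fun q hq => by rw [Real.log_pow])

lemma support_G (n : ℕ+) :
    Function.support (fun q : ℕ =>
      ((n : ℕ).factorization q : ℝ) * Real.log q * ff s t n) ⊆
        ↑(n : ℕ).primeFactors := by
  intro q hq
  simp only [Function.mem_support] at hq
  by_contra h
  have : (n : ℕ).factorization q = 0 := by
    rwa [← Nat.support_factorization, Finset.mem_coe, Finsupp.notMem_support_iff] at h
  simp [this] at hq

lemma summable_g_n (n : ℕ+) :
    Summable (fun pp : Nat.Primes =>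
      ((n : ℕ).factorization (pp : ℕ) : ℝ) * Real.log ((pp : ℕ) : ℝ) * ff s t n) := by
  have hG : Summable (fun q : ℕ =>
      ((n : ℕ).factorization q : ℝ) * Real.log q * ff s t n) :=
    summable_of_finite_support ((Finset.finite_toSet _).subset (support_G n))
  exact hG.subtype _

lemma tsum_g_n (n : ℕ+) :
    (∑' pp : Nat.Primes,
        ((n : ℕ).factorization (pp : ℕ) : ℝ) * Real.log ((pp : ℕ) : ℝ) * ff s t n) =
      ff s t n * Real.log ((n : ℕ) : ℝ) := by
  have hsub : Function.support (fun q : ℕ =>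
      ((n : ℕ).factorization q : ℝ) * Real.log q * ff s t n) ⊆ {q : ℕ | q.Prime} := by
    intro q hq
    have := support_G (s := s) (t := t) n hq
    exact Nat.prime_of_mem_primeFactors (by exact_mod_cast this)
  have h1 : (∑' pp : Nat.Primes,
      ((n : ℕ).factorization (pp : ℕ) : ℝ) * Real.log ((pp : ℕ) : ℝ) * ff s t n) =
      ∑' q : ℕ, ((n : ℕ).factorization q : ℝ) * Real.log q * ff s t n :=
    tsum_subtype_eq_of_support_subset hsub
  rw [h1, tsum_eq_sum (s := (n : ℕ).primeFactors) (fun q hq => by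
    have : (n : ℕ).factorization q = 0 := by
      rwa [← Nat.support_factorization, Finsupp.notMem_support_iff] at hq
    simp [this])]
  rw [← Finset.sum_mul, ← log_pnat, mul_comm]

end StmtAux4

theorem stmt_6 (s t : ℝ) (ht : 0 < t) (hs : 1 + t < s) :
    Summable (fun n : ℕ+ => (rad n : ℝ) ^ t * Real.log (n : ℝ) / (n : ℝ) ^ s) ∧
    (∑' n : ℕ+, (rad n : ℝ) ^ t * Real.log (n : ℝ) / (n : ℝ) ^ s) =
      S s t * ∑' n : ℕ+, (rad n : ℝ) ^ t / (n : ℝ) ^ s := by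
  open StmtAux StmtAux2 StmtAux3 StmtAux4 in
  have key : ∀ n : ℕ+, (rad n : ℝ) ^ t * Real.log (n : ℝ) / (n : ℝ) ^ s
      = ff s t n * Real.log ((n : ℕ) : ℝ) := fun n => by
    show (rad n : ℝ) ^ t * Real.log ((n : ℕ) : ℝ) / ((n : ℕ) : ℝ) ^ s = _
    rw [StmtAux.ff, mul_div_right_comm]
  have hsum : Summable (fun n : ℕ+ => ff s t n * Real.log ((n : ℕ) : ℝ)) :=
    StmtAux.summable_ff_log s t ht hs
  constructor
  · exact hsum.congr (fun n => (key n).symm)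
  · have hrhs : (∑' n : ℕ+, (rad n : ℝ) ^ t / (n : ℝ) ^ s) = ∑' n : ℕ+, ff s t n := rfl
    rw [hrhs]
    have hl : (∑' n : ℕ+, (rad n : ℝ) ^ t * Real.log (n : ℝ) / (n : ℝ) ^ s)
        = ∑' n : ℕ+, ff s t n * Real.log ((n : ℕ) : ℝ) := tsum_congr key
    rw [hl]
    set g : ℕ+ → Nat.Primes → ℝ := fun n pp =>
      ((n : ℕ).factorization (pp : ℕ) : ℝ) * Real.log ((pp : ℕ) : ℝ) * ff s t n with hg
    have hgnn : ∀ q : ℕ+ × Nat.Primes, 0 ≤ g q.1 q.2 := by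
      rintro ⟨n, pp⟩
      have h1 : (1 : ℝ) ≤ ((pp : ℕ) : ℝ) := by exact_mod_cast pp.2.one_lt.le
      exact mul_nonneg (mul_nonneg (Nat.cast_nonneg _) (Real.log_nonneg h1))
        (StmtAux.ff_nonneg s t n)
    have h₁ : ∀ n, Summable (g n) := fun n => StmtAux4.summable_g_n n
    have h₁' : ∀ n, (∑' pp, g n pp) = ff s t n * Real.log ((n : ℕ) : ℝ) :=
      fun n => StmtAux4.tsum_g_n n
    have h₂ : ∀ pp : Nat.Primes, Summable (fun n => g n pp) := fun pp => by
      have := (StmtAux3.summable_nu_ff (p := (pp : ℕ)) ht hs pp.2).mul_right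
        (Real.log ((pp : ℕ) : ℝ))
      exact this.congr (fun n => by rw [hg]; ring)
    have huncurry : Summable (Function.uncurry g) :=
      (summable_prod_of_nonneg hgnn).mpr ⟨h₁, hsum.congr (fun n => (h₁' n).symm)⟩
    calc (∑' n : ℕ+, ff s t n * Real.log ((n : ℕ) : ℝ))
        = ∑' n : ℕ+, ∑' pp : Nat.Primes, g n pp := tsum_congr (fun n => (h₁' n).symm)
      _ = ∑' pp : Nat.Primes, ∑' n : ℕ+, g n pp := (Summable.tsum_comm' huncurry h₁ h₂).symm
      _ = ∑' pp : Nat.Primes,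
            ((((pp : ℕ) : ℝ) ^ s / (((pp : ℕ) : ℝ) ^ s - 1)) *
              ((((pp : ℕ) : ℝ) ^ t) / (((pp : ℕ) : ℝ) ^ s - 1 + ((pp : ℕ) : ℝ) ^ t)) *
              Real.log ((pp : ℕ) : ℝ)) * ∑' n : ℕ+, ff s t n :=
          tsum_congr (fun pp => StmtAux3.per_prime ht hs pp.2)
      _ = S s t * ∑' n : ℕ+, ff s t n := by rw [tsum_mul_right, S]
end

section
/- For all real numbers s and t with t > 0 and s > 1 + t, the series ∑_{n≥1} R(n)^t · ln R(n) / n^s converges and equals T(s,t) · ∑_{n≥1} R(n)^t / n^s. -/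
open scoped BigOperators

lemma rad_pos (n : ℕ) : 0 < rad n :=
  Finset.prod_pos fun p hp => (Nat.prime_of_mem_primeFactors hp).pos

lemma rad_le {n : ℕ} (hn : n ≠ 0) : rad n ≤ n :=
  Nat.le_of_dvd (Nat.pos_of_ne_zero hn) (Nat.prod_primeFactors_dvd n)

example (n : ℕ+) : ((n : ℝ)) = ((n : ℕ) : ℝ) := by norm_cast

lemma summable_a {s t : ℝ} (ht : 0 < t) (hs : 1 + t < s) :
    Summable (fun n : ℕ+ => (rad n : ℝ) ^ t / (n : ℝ) ^ s) := by
  have h1 : Summable (fun n : ℕ => (n : ℝ) ^ (t - s)) :=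
    Real.summable_nat_rpow.mpr (by linarith)
  have h2 : Summable (fun n : ℕ+ => ((n : ℕ) : ℝ) ^ (t - s)) :=
    h1.comp_injective PNat.coe_injective
  refine Summable.of_nonneg_of_le (fun n => by positivity) (fun n => ?_) h2
  have hn0 : (0:ℝ) < ((n:ℕ):ℝ) := by exact_mod_cast n.pos
  have hr : (rad n : ℝ) ≤ ((n:ℕ):ℝ) := by exact_mod_cast rad_le n.pos.ne'
  have hcast : ((n:ℕ):ℝ) = (n:ℝ) := by norm_cast
  rw [Real.rpow_sub hn0, hcast]
  gcongr

lemma summable_b {s t : ℝ} (ht : 0 < t) (hs : 1 + t < s) :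
    Summable (fun n : ℕ+ => (rad n : ℝ) ^ t * Real.log (rad n : ℝ) / (n : ℝ) ^ s) := by
  set ε : ℝ := (s - t - 1) / 2 with hε
  have hε0 : 0 < ε := by rw [hε]; linarith
  have h1 : Summable (fun n : ℕ => (n : ℝ) ^ (t + ε - s)) :=
    Real.summable_nat_rpow.mpr (by rw [hε]; linarith)
  have h2 : Summable (fun n : ℕ+ => ε⁻¹ * ((n : ℕ) : ℝ) ^ (t + ε - s)) :=
    (h1.comp_injective PNat.coe_injective).mul_left _
  refine Summable.of_nonneg_of_le (fun n => ?_) (fun n => ?_) h2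
  · have h1r : (1:ℝ) ≤ (rad n : ℝ) := by exact_mod_cast rad_pos (n:ℕ)
    have := Real.log_nonneg h1r
    positivity
  · have hn0 : (0:ℝ) < ((n:ℕ):ℝ) := by exact_mod_cast n.pos
    have hr : (rad n : ℝ) ≤ ((n:ℕ):ℝ) := by exact_mod_cast rad_le n.pos.ne'
    have hrad0 : (0:ℝ) ≤ (rad n : ℝ) := by positivity
    have hcast : ((n:ℕ):ℝ) = (n:ℝ) := by norm_cast
    have hlog : Real.log (rad n : ℝ) ≤ ((n:ℕ):ℝ) ^ ε / ε :=
      le_trans (Real.log_le_log (by exact_mod_cast rad_pos (n:ℕ)) hr)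
        (Real.log_le_rpow_div hn0.le hε0)
    have hnum : (rad n : ℝ) ^ t * Real.log (rad n : ℝ)
        ≤ ((n:ℕ):ℝ) ^ t * (((n:ℕ):ℝ) ^ ε / ε) := by
      apply mul_le_mul (Real.rpow_le_rpow hrad0 hr ht.le) hlog
        (Real.log_nonneg (by exact_mod_cast rad_pos (n:ℕ))) (by positivity)
    calc (rad n : ℝ) ^ t * Real.log (rad n : ℝ) / (n : ℝ) ^ s
        ≤ ((n:ℕ):ℝ) ^ t * (((n:ℕ):ℝ) ^ ε / ε) / ((n:ℕ):ℝ) ^ s := by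
          rw [← hcast]; gcongr
      _ = ε⁻¹ * ((n:ℕ):ℝ) ^ (t + ε - s) := by
          rw [Real.rpow_sub hn0, Real.rpow_add hn0]
          field_simp

lemma divisor_sum {s t : ℝ} (ht : 0 < t) (hs : 1 + t < s) {p : ℕ} (hp : p.Prime)
    (hsa : Summable (fun n : ℕ+ => (rad n : ℝ) ^ t / (n : ℝ) ^ s)) :
    (∑' n : ℕ+, (if p ∣ (n:ℕ) then (rad n : ℝ) ^ t / (n : ℝ) ^ s else 0))
      = (p:ℝ) ^ t / ((p:ℝ) ^ s - 1 + (p:ℝ) ^ t) *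
        ∑' n : ℕ+, (rad n : ℝ) ^ t / (n : ℝ) ^ s := by
  classical
  set a : ℕ+ → ℝ := fun n => (rad n : ℝ) ^ t / (n : ℝ) ^ s with ha_def
  have ha_nonneg : ∀ n, 0 ≤ a n := fun n => by positivity
  have hP1 : (1:ℝ) < (p:ℝ) := by exact_mod_cast hp.one_lt
  have hP0 : (0:ℝ) < (p:ℝ) := by linarith
  have hs0 : 0 < s := by linarith
  set E : ℝ := (p:ℝ) ^ s with hE_def
  set Pt : ℝ := (p:ℝ) ^ t with hPt_def
  have hE1 : (1:ℝ) < E := Real.one_lt_rpow_iff_of_pos hP0 |>.mpr (Or.inl ⟨hP1, hs0⟩)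
  have hE0 : (0:ℝ) < E := by linarith
  set q : ℝ := E⁻¹ with hq_def
  have hq0 : (0:ℝ) < q := by positivity
  have hq1 : q < 1 := by rw [hq_def]; exact inv_lt_one_of_one_lt₀ hE1
  have hPt0 : (0:ℝ) < Pt := Real.rpow_pos_of_pos hP0 t
  set D : ℝ := E - 1 + Pt with hD_def
  have hD0 : (0:ℝ) < D := by rw [hD_def]; linarith
  -- the subtype of positive naturals not divisible by p
  set Ms : Set ℕ+ := {n : ℕ+ | ¬ p ∣ (n:ℕ)} with hMs_def
  set g : ℕ × Ms → ℕ+ := fun x => ⟨p ^ x.1 * (x.2.1 : ℕ),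
    Nat.mul_pos (Nat.pow_pos hp.pos) x.2.1.pos⟩ with hg_def
  have hgcoe : ∀ x : ℕ × Ms, ((g x : ℕ+) : ℕ) = p ^ x.1 * (x.2.1 : ℕ) := fun x => rfl
  have fk : ∀ (k : ℕ) (m : Ms), (p ^ k * (m.1:ℕ)).factorization p = k := by
    intro k m
    rw [Nat.factorization_mul (pow_ne_zero _ hp.pos.ne') m.1.pos.ne']
    simp [hp.factorization_pow, Nat.factorization_eq_zero_of_not_dvd m.2]
  have hginj : Function.Injective g := by
    rintro ⟨k, m⟩ ⟨k', m'⟩ hmm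
    have h : p ^ k * (m.1:ℕ) = p ^ k' * (m'.1:ℕ) := congrArg (fun n : ℕ+ => (n:ℕ)) hmm
    have hk : k = k' := by
      have := congrArg (fun n => n.factorization p) h
      simpa [fk k m, fk k' m'] using this
    subst hk
    have hm : (m.1:ℕ) = (m'.1:ℕ) :=
      Nat.eq_of_mul_eq_mul_left (Nat.pow_pos hp.pos) h
    exact Prod.ext rfl (Subtype.ext (PNat.coe_injective hm))
  have hgsurj : Function.Surjective g := by
    intro n
    have hn0 : (n:ℕ) ≠ 0 := n.pos.ne'
    refine ⟨⟨(n:ℕ).factorization p,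
      ⟨⟨(n:ℕ) / p ^ (n:ℕ).factorization p, Nat.ordCompl_pos p hn0⟩,
        Nat.not_dvd_ordCompl hp hn0⟩⟩, ?_⟩
    exact PNat.coe_injective ((hgcoe _).trans (Nat.ordProj_mul_ordCompl_eq_self (n:ℕ) p))
  set w : ℕ → ℝ := fun k => if k = 0 then 1 else Pt * q ^ k with hw_def
  have hpowks : ∀ k : ℕ, ((p:ℝ) ^ k : ℝ) ^ s = E ^ k := by
    intro k
    rw [hE_def, ← Real.rpow_natCast (p:ℝ) k, ← Real.rpow_natCast ((p:ℝ)^s) k,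
      ← Real.rpow_mul hP0.le, ← Real.rpow_mul hP0.le, mul_comm]
  have key : ∀ (k : ℕ) (m : Ms), a (g (k, m)) = w k * a m.1 := by
    intro k m
    have hm0 : (m.1:ℕ) ≠ 0 := m.1.pos.ne'
    match k with
    | 0 =>
      have : g (0, m) = m.1 := PNat.coe_injective (by simp [hgcoe])
      rw [this]; simp [hw_def]
    | Nat.succ j =>
      have hpf : (p ^ (j+1) * (m.1:ℕ)).primeFactors = insert p (m.1:ℕ).primeFactors := by
        rw [Nat.primeFactors_mul (pow_ne_zero _ hp.pos.ne') hm0,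
          Nat.primeFactors_prime_pow (Nat.succ_ne_zero j) hp, ← Finset.insert_eq]
      have hnotmem : p ∉ (m.1:ℕ).primeFactors := fun h => m.2 (Nat.dvd_of_mem_primeFactors h)
      have hrad : rad (p ^ (j+1) * (m.1:ℕ)) = p * rad (m.1:ℕ) := by
        rw [rad, hpf, Finset.prod_insert hnotmem]; rfl
      have hcast1 : ((g (j+1, m) : ℕ+) : ℝ) = (p:ℝ) ^ (j+1) * ((m.1:ℕ):ℝ) := by
        have := hgcoe (j+1, m)
        push_cast [this]
        norm_cast
      have hcast2 : ((m.1 : ℕ+) : ℝ) = ((m.1:ℕ):ℝ) := by norm_cast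
      have hradg : (rad ((g (j+1, m) : ℕ+) : ℕ) : ℝ) = (p:ℝ) * (rad (m.1:ℕ) : ℝ) := by
        rw [hgcoe (j+1, m), hrad]; push_cast; ring
      have hm0R : (0:ℝ) < ((m.1:ℕ):ℝ) := by exact_mod_cast m.1.pos
      have hradR : (0:ℝ) ≤ (rad (m.1:ℕ) : ℝ) := by positivity
      rw [ha_def]
      simp only []
      rw [hradg, hcast1, hcast2]
      rw [Real.mul_rpow hP0.le hradR, Real.mul_rpow (by positivity) hm0R.le, hpowks (j+1)]
      rw [hw_def]
      simp only [Nat.succ_ne_zero, if_false]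
      rw [mul_div_mul_comm, hq_def, inv_pow, div_eq_mul_inv, hPt_def]
  -- summability facts
  have hag : Summable (fun x : ℕ × Ms => a (g x)) := hsa.comp_injective hginj
  have hslice : ∀ k : ℕ, Summable (fun m : Ms => a (g (k, m))) := by
    intro k
    exact hsa.comp_injective (fun m m' h => (Prod.ext_iff.mp (hginj h)).2)
  have hA_sum : Summable (fun m : Ms => a m.1) := hsa.comp_injective Subtype.val_injective
  set A : ℝ := ∑' m : Ms, a m.1 with hA_def
  set F : ℝ := ∑' n : ℕ+, a n with hF_def
  have hFg : ∑' x : ℕ × Ms, a (g x) = F := (Equiv.ofBijective g ⟨hginj, hgsurj⟩).tsum_eq a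
  have hFsplit : F = (∑' k : ℕ, w k) * A := by
    rw [← hFg, Summable.tsum_prod' hag hslice]
    have hin : ∀ k : ℕ, ∑' m : Ms, a (g (k, m)) = w k * A := by
      intro k
      rw [tsum_congr (fun m => key k m), tsum_mul_left]
    rw [tsum_congr hin, tsum_mul_right]
  have hw_eq : w = fun k => Pt * q ^ k + (if k = 0 then 1 - Pt else 0) := by
    funext k
    match k with
    | 0 => simp [hw_def]
    | Nat.succ j => simp [hw_def]
  have hgeo : Summable (fun k : ℕ => Pt * q ^ k) :=
    (summable_geometric_of_lt_one hq0.le hq1).mul_left _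
  have hind : Summable (fun k : ℕ => if k = 0 then (1:ℝ) - Pt else 0) :=
    summable_of_ne_finset_zero (s := {0}) (fun b hb => if_neg (by simpa using hb))
  have hE1' : E - 1 ≠ 0 := by linarith
  have hWval : ∑' k : ℕ, w k = D / (E - 1) := by
    rw [hw_eq, Summable.tsum_add hgeo hind, tsum_mul_left,
      tsum_geometric_of_lt_one hq0.le hq1, tsum_ite_eq 0 (fun _ => (1:ℝ) - Pt), hq_def, hD_def]
    field_simp
    ring
  have hsum2 : Summable (fun n : ℕ+ => if ¬ p ∣ (n:ℕ) then a n else 0) :=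
    Summable.of_nonneg_of_le (fun n => by split; exacts [ha_nonneg n, le_rfl])
      (fun n => by split; exacts [le_rfl, ha_nonneg n]) hsa
  have hcompl : A = ∑' n : ℕ+, (if ¬ p ∣ (n:ℕ) then a n else 0) := by
    rw [hA_def, tsum_subtype Ms (fun n => a n)]
    exact tsum_congr fun n => by
      by_cases h : p ∣ (n:ℕ) <;>
        simp [Set.indicator_apply, hMs_def, Set.mem_setOf_eq, h]
  have hsplitn : ∀ n : ℕ+, (if p ∣ (n:ℕ) then a n else 0)
      = a n - (if ¬ p ∣ (n:ℕ) then a n else 0) := by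
    intro n; by_cases h : p ∣ (n:ℕ) <;> simp [h]
  have hLHS : (∑' n : ℕ+, (if p ∣ (n:ℕ) then a n else 0)) = F - A := by
    rw [tsum_congr hsplitn, Summable.tsum_sub hsa hsum2, ← hcompl]
  rw [hLHS, hFsplit, hWval]
  field_simp
  ring

theorem stmt_7 (s t : ℝ) (ht : 0 < t) (hs : 1 + t < s) :
    Summable (fun n : ℕ+ => (rad n : ℝ) ^ t * Real.log (rad n : ℝ) / (n : ℝ) ^ s) ∧
    (∑' n : ℕ+, (rad n : ℝ) ^ t * Real.log (rad n : ℝ) / (n : ℝ) ^ s) =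
      T s t * ∑' n : ℕ+, (rad n : ℝ) ^ t / (n : ℝ) ^ s := by
  classical
  have hsa := summable_a ht hs
  have hsb := summable_b ht hs
  refine ⟨hsb, ?_⟩
  set a : ℕ+ → ℝ := fun n => (rad n : ℝ) ^ t / (n : ℝ) ^ s with ha_def
  set b : ℕ+ → ℝ := fun n => (rad n : ℝ) ^ t * Real.log (rad n : ℝ) / (n : ℝ) ^ s with hb_def
  have ha_nonneg : ∀ n, 0 ≤ a n := fun n => by positivity
  set F : ℝ := ∑' n : ℕ+, a n with hF_def
  set f2 : ℕ+ × Nat.Primes → ℝ :=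
    fun x => if ((x.2 : ℕ)) ∣ ((x.1 : ℕ)) then a x.1 * Real.log ((x.2 : ℕ) : ℝ) else 0
    with hf2_def
  have hlog_nonneg : ∀ pp : Nat.Primes, 0 ≤ Real.log ((pp:ℕ):ℝ) := fun pp =>
    Real.log_nonneg (by exact_mod_cast pp.2.one_lt.le)
  have hf2_nonneg : ∀ x, 0 ≤ f2 x := by
    intro x
    simp only [hf2_def]
    split
    · exact mul_nonneg (ha_nonneg _) (hlog_nonneg _)
    · exact le_rfl
  -- row sums
  have hrow : ∀ n : ℕ+, Summable (fun pp : Nat.Primes => f2 (n, pp)) ∧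
      ∑' pp : Nat.Primes, f2 (n, pp) = b n := by
    intro n
    set Sn : Finset Nat.Primes := (n:ℕ).primeFactors.attach.map
      ⟨fun (q : {x // x ∈ (n:ℕ).primeFactors}) =>
        (⟨q.1, Nat.prime_of_mem_primeFactors q.2⟩ : Nat.Primes),
       fun x y hxy => Subtype.ext (congrArg (fun r : Nat.Primes => (r : ℕ)) hxy)⟩
       with hSn_def
    have hvan : ∀ pp : Nat.Primes, pp ∉ Sn → f2 (n, pp) = 0 := by
      intro pp hpp
      simp only [hf2_def]
      refine if_neg (fun hdvd => hpp ?_)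
      rw [hSn_def, Finset.mem_map]
      exact ⟨⟨(pp:ℕ), Nat.mem_primeFactors.mpr ⟨pp.2, hdvd, n.pos.ne'⟩⟩,
        Finset.mem_attach _ _, rfl⟩
    refine ⟨summable_of_ne_finset_zero hvan, ?_⟩
    rw [tsum_eq_sum hvan, hSn_def, Finset.sum_map]
    show ∑ q ∈ (n:ℕ).primeFactors.attach, f2 (n, ((⟨q.1, Nat.prime_of_mem_primeFactors q.2⟩ : Nat.Primes))) = b n
    have hterm : ∀ q ∈ (n:ℕ).primeFactors.attach,
        f2 (n, ((⟨q.1, Nat.prime_of_mem_primeFactors q.2⟩ : Nat.Primes)))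
          = a n * Real.log ((q.1 : ℕ) : ℝ) := by
      intro q _
      simp only [hf2_def]
      exact if_pos (Nat.dvd_of_mem_primeFactors q.2)
    rw [Finset.sum_congr rfl hterm]
    rw [Finset.sum_attach ((n:ℕ)).primeFactors (fun x => a n * Real.log ((x : ℕ) : ℝ))]
    rw [← Finset.mul_sum]
    have hlogr : Real.log ((rad (n:ℕ) : ℕ) : ℝ)
        = ∑ x ∈ (n:ℕ).primeFactors, Real.log ((x : ℕ) : ℝ) := by
      simp only [rad]
      push_cast
      exact Real.log_prod (fun x hx => by
        exact_mod_cast (Nat.prime_of_mem_primeFactors hx).pos.ne')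
    rw [← hlogr, ha_def, hb_def]
    simp only []
    rw [div_mul_eq_mul_div]
  -- column summability
  have hcol_summable : ∀ pp : Nat.Primes, Summable (fun n : ℕ+ => f2 (n, pp)) := by
    intro pp
    refine Summable.of_nonneg_of_le (fun n => hf2_nonneg (n, pp)) (fun n => ?_)
      (hsa.mul_right (Real.log ((pp:ℕ):ℝ)))
    simp only [hf2_def]
    split
    · exact le_rfl
    · exact mul_nonneg (ha_nonneg _) (hlog_nonneg _)
  have hf2_summable : Summable f2 := by
    rw [summable_prod_of_nonneg hf2_nonneg]
    exact ⟨fun n => (hrow n).1, hsb.congr (fun n => ((hrow n).2).symm)⟩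
  have hswap := Summable.tsum_comm' (f := fun (n : ℕ+) (pp : Nat.Primes) => f2 (n, pp))
    hf2_summable (fun n => (hrow n).1) hcol_summable
  have hcol_val : ∀ pp : Nat.Primes,
      ∑' n : ℕ+, f2 (n, pp) =
        (((pp:ℕ):ℝ) ^ t / (((pp:ℕ):ℝ) ^ s - 1 + ((pp:ℕ):ℝ) ^ t) * Real.log ((pp:ℕ):ℝ)) * F := by
    intro pp
    have h1 : ∀ n : ℕ+, f2 (n, pp)
        = (if ((pp:ℕ)) ∣ ((n:ℕ)) then a n else 0) * Real.log ((pp:ℕ):ℝ) := by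
      intro n
      simp only [hf2_def]
      split <;> simp
    calc ∑' n : ℕ+, f2 (n, pp)
        = (∑' n : ℕ+, if ((pp:ℕ)) ∣ ((n:ℕ)) then a n else 0) * Real.log ((pp:ℕ):ℝ) := by
          rw [tsum_congr h1, tsum_mul_right]
      _ = (((pp:ℕ):ℝ) ^ t / (((pp:ℕ):ℝ) ^ s - 1 + ((pp:ℕ):ℝ) ^ t) * F) * Real.log ((pp:ℕ):ℝ) := by
          congr 1
          exact divisor_sum ht hs pp.2 hsa
      _ = (((pp:ℕ):ℝ) ^ t / (((pp:ℕ):ℝ) ^ s - 1 + ((pp:ℕ):ℝ) ^ t) * Real.log ((pp:ℕ):ℝ)) * F := by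
          ring
  calc ∑' n : ℕ+, b n
      = ∑' n : ℕ+, ∑' pp : Nat.Primes, f2 (n, pp) :=
        tsum_congr (fun n => ((hrow n).2).symm)
    _ = ∑' pp : Nat.Primes, ∑' n : ℕ+, f2 (n, pp) := hswap.symm
    _ = ∑' pp : Nat.Primes,
          (((pp:ℕ):ℝ) ^ t / (((pp:ℕ):ℝ) ^ s - 1 + ((pp:ℕ):ℝ) ^ t) * Real.log ((pp:ℕ):ℝ)) * F :=
        tsum_congr hcol_val
    _ = (∑' pp : Nat.Primes,
          ((pp:ℕ):ℝ) ^ t / (((pp:ℕ):ℝ) ^ s - 1 + ((pp:ℕ):ℝ) ^ t) * Real.log ((pp:ℕ):ℝ)) * F :=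
        tsum_mul_right
    _ = T s t * F := rfl
end

section
/- For all real numbers s and t with t > 0 and s > 1 + t, one has ∑_{n : T(s,t)·ln n < S(s,t)·ln R(n)} (R(n)^t / n^s) · (S(s,t) · ln R(n) − T(s,t) · ln n) = ∑_{n : T(s,t)·ln n > S(s,t)·ln R(n)} (R(n)^t / n^s) · (T(s,t) · ln n − S(s,t) · ln R(n)), both series converging. -/
open scoped BigOperators

namespace Aux9

lemma rad_dvd (n : ℕ) : rad n ∣ n := Nat.prod_primeFactors_dvd n

lemma rad_pos (n : ℕ) : 0 < rad n :=
  Finset.prod_pos fun p hp => (Nat.prime_of_mem_primeFactors hp).pos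

lemma rad_le {n : ℕ} (hn : n ≠ 0) : rad n ≤ n :=
  Nat.le_of_dvd (Nat.pos_of_ne_zero hn) (rad_dvd n)

noncomputable def w (s t : ℝ) (n : ℕ+) : ℝ :=
  ((rad (n : ℕ) : ℕ) : ℝ) ^ t / (((n : ℕ) : ℝ)) ^ s

lemma w_pos (s t : ℝ) (n : ℕ+) : 0 < w s t n := by
  apply div_pos
  · exact Real.rpow_pos_of_pos (by exact_mod_cast rad_pos (n : ℕ)) t
  · exact Real.rpow_pos_of_pos (by exact_mod_cast n.pos) s

lemma w_le (s : ℝ) {t : ℝ} (ht : 0 ≤ t) (n : ℕ+) :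
    w s t n ≤ ((n : ℕ) : ℝ) ^ (t - s) := by
  have hn : (0:ℝ) < ((n : ℕ) : ℝ) := by exact_mod_cast n.pos
  unfold w
  rw [Real.rpow_sub hn]
  gcongr
  · exact_mod_cast rad_le n.ne_zero

lemma rpow_log_le {x ε : ℝ} (hx : 0 ≤ x) (hε : 0 < ε) : Real.log x ≤ x ^ ε / ε :=
  Real.log_le_rpow_div hx hε

/-- summability of `log n / n^r` over ℕ for `r > 1`. -/
lemma summable_log_div_rpow {r : ℝ} (hr : 1 < r) :
    Summable (fun n : ℕ => Real.log n / (n : ℝ) ^ r) := by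
  set ε : ℝ := (r - 1) / 2 with hε
  have hε0 : 0 < ε := by rw [hε]; linarith
  have hkey : 1 < r - ε := by rw [hε]; linarith
  have hsum : Summable (fun n : ℕ => (1/ε) * (1 / (n : ℝ) ^ (r - ε))) :=
    (Real.summable_one_div_nat_rpow.mpr hkey).mul_left _
  apply hsum.of_nonneg_of_le
  · intro n
    apply div_nonneg (Real.log_natCast_nonneg n)
    positivity
  · intro n
    rcases Nat.eq_zero_or_pos n with h0 | h1
    · subst h0
      simp only [Nat.cast_zero, Real.log_zero, zero_div]
      positivity
    · have hn : (0:ℝ) < (n : ℝ) := by exact_mod_cast h1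
      have h2 : Real.log n ≤ (n:ℝ) ^ ε / ε := rpow_log_le hn.le hε0
      have h3 : Real.log n / (n:ℝ) ^ r ≤ ((n:ℝ) ^ ε / ε) / (n:ℝ) ^ r := by
        gcongr
      refine h3.trans (le_of_eq ?_)
      have hrε : (n:ℝ) ^ (r - ε) = (n:ℝ) ^ r / (n:ℝ) ^ ε := Real.rpow_sub hn r ε
      have hne1 : ((n:ℝ) ^ r) ≠ 0 := (Real.rpow_pos_of_pos hn r).ne'
      have hne2 : ((n:ℝ) ^ ε) ≠ 0 := (Real.rpow_pos_of_pos hn ε).ne'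
      rw [hrε]
      field_simp


lemma summable_w {s t : ℝ} (ht : 0 < t) (hs : 1 + t < s) : Summable (w s t) := by
  have h1 : (1:ℝ) < s - t := by linarith
  have hmaj : Summable (fun n : ℕ+ => 1 / ((n:ℕ):ℝ) ^ (s - t)) :=
    (Real.summable_one_div_nat_rpow.mpr h1).comp_injective PNat.coe_injective
  apply hmaj.of_nonneg_of_le (fun n => (w_pos s t n).le)
  intro n
  have hn : (0:ℝ) < ((n:ℕ):ℝ) := by exact_mod_cast n.pos
  calc w s t n ≤ ((n:ℕ):ℝ) ^ (t - s) := w_le s ht.le n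
    _ = 1 / ((n:ℕ):ℝ) ^ (s - t) := by
        rw [one_div, ← Real.rpow_neg hn.le, neg_sub]

lemma w_le' {s t : ℝ} (ht : 0 < t) (n : ℕ+) :
    w s t n ≤ 1 / ((n:ℕ):ℝ) ^ (s - t) := by
  have hn : (0:ℝ) < ((n:ℕ):ℝ) := by exact_mod_cast n.pos
  calc w s t n ≤ ((n:ℕ):ℝ) ^ (t - s) := w_le s ht.le n
    _ = 1 / ((n:ℕ):ℝ) ^ (s - t) := by
        rw [one_div, ← Real.rpow_neg hn.le, neg_sub]

lemma summable_w_log {s t : ℝ} (ht : 0 < t) (hs : 1 + t < s) :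
    Summable (fun n : ℕ+ => Real.log ((n:ℕ):ℝ) * w s t n) := by
  have h1 : (1:ℝ) < s - t := by linarith
  have hmaj : Summable (fun n : ℕ+ => Real.log ((n:ℕ):ℝ) / ((n:ℕ):ℝ) ^ (s - t)) :=
    (summable_log_div_rpow h1).comp_injective PNat.coe_injective
  apply hmaj.of_nonneg_of_le
  · intro n; exact mul_nonneg (Real.log_natCast_nonneg _) (w_pos s t n).le
  · intro n
    calc Real.log ((n:ℕ):ℝ) * w s t n
        ≤ Real.log ((n:ℕ):ℝ) * (1 / ((n:ℕ):ℝ) ^ (s - t)) :=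
          mul_le_mul_of_nonneg_left (w_le' ht n) (Real.log_natCast_nonneg _)
      _ = Real.log ((n:ℕ):ℝ) / ((n:ℕ):ℝ) ^ (s - t) := by rw [mul_one_div]

lemma summable_primes_log {r : ℝ} (hr : 1 < r) :
    Summable (fun p : Nat.Primes => Real.log ((p:ℕ):ℝ) / ((p:ℕ):ℝ) ^ r) :=
  (summable_log_div_rpow hr).comp_injective Nat.Primes.coe_nat_injective

section PrimeBounds

variable {s t : ℝ} (ht : 0 < t) (hs : 1 + t < s) {P : ℝ} (hP2 : 2 ≤ P)

include hs ht hP2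

lemma hPs2 : 2 ≤ P ^ s := by
  have h0 : (1:ℝ) ≤ P := by linarith
  calc (2:ℝ) ≤ P := hP2
    _ = P ^ (1:ℝ) := (Real.rpow_one P).symm
    _ ≤ P ^ s := Real.rpow_le_rpow_of_exponent_le h0 (by linarith)

lemma bound1 : P ^ s / (P ^ s - 1) ≤ 2 := by
  have h2 := hPs2 ht hs hP2
  rw [div_le_iff₀ (by linarith)]
  linarith

lemma bound2 : P ^ t / (P ^ s - 1 + P ^ t) ≤ 2 * (P ^ t / P ^ s) := by
  have h2 := hPs2 ht hs hP2
  have hpt : 0 < P ^ t := Real.rpow_pos_of_pos (by linarith) t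
  have hps : 0 < P ^ s := by linarith
  rw [mul_div_assoc', div_le_div_iff₀ (by linarith) hps]
  nlinarith

end PrimeBounds

lemma summable_S_summand {s t : ℝ} (ht : 0 < t) (hs : 1 + t < s) :
    Summable (fun p : Nat.Primes => (((p : ℕ) : ℝ) ^ s / (((p : ℕ) : ℝ) ^ s - 1)) *
      (((p : ℕ) : ℝ) ^ t / (((p : ℕ) : ℝ) ^ s - 1 + ((p : ℕ) : ℝ) ^ t)) *
      Real.log ((p : ℕ) : ℝ)) := by
  have h1 : (1:ℝ) < s - t := by linarith
  have hmaj : Summable (fun p : Nat.Primes =>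
      4 * (Real.log ((p:ℕ):ℝ) / ((p:ℕ):ℝ) ^ (s - t))) :=
    (summable_primes_log h1).mul_left 4
  apply hmaj.of_nonneg_of_le
  · intro p
    have hP2 : (2:ℝ) ≤ ((p:ℕ):ℝ) := by exact_mod_cast p.2.two_le
    have h2 := hPs2 ht hs hP2
    have hpt : (0:ℝ) < ((p:ℕ):ℝ) ^ t := Real.rpow_pos_of_pos (by linarith) t
    have hlog : 0 ≤ Real.log ((p:ℕ):ℝ) := Real.log_natCast_nonneg _
    apply mul_nonneg (mul_nonneg ?_ ?_) hlog
    · apply div_nonneg (by positivity) (by linarith)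
    · apply div_nonneg hpt.le; linarith
  · intro p
    have hP2 : (2:ℝ) ≤ ((p:ℕ):ℝ) := by exact_mod_cast p.2.two_le
    set P : ℝ := ((p:ℕ):ℝ) with hP
    have h2 := hPs2 ht hs hP2
    have hpt : (0:ℝ) < P ^ t := Real.rpow_pos_of_pos (by linarith) t
    have hps : (0:ℝ) < P ^ s := by linarith
    have hlog : 0 ≤ Real.log P := Real.log_natCast_nonneg _
    have hb1 := bound1 ht hs hP2
    have hb2 := bound2 ht hs hP2
    have hAB : P ^ s / (P ^ s - 1) * (P ^ t / (P ^ s - 1 + P ^ t))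
        ≤ 2 * (2 * (P ^ t / P ^ s)) := by
      apply mul_le_mul hb1 hb2 ?_ (by norm_num)
      apply div_nonneg hpt.le; linarith
    have hsplit : P ^ t / P ^ s = 1 / P ^ (s - t) := by
      rw [Real.rpow_sub (by linarith : (0:ℝ) < P), one_div_div]
    calc P ^ s / (P ^ s - 1) * (P ^ t / (P ^ s - 1 + P ^ t)) * Real.log P
        ≤ 2 * (2 * (P ^ t / P ^ s)) * Real.log P := mul_le_mul_of_nonneg_right hAB hlog
      _ = 4 * (Real.log P / P ^ (s - t)) := by rw [hsplit]; ring

lemma summable_T_summand {s t : ℝ} (ht : 0 < t) (hs : 1 + t < s) :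
    Summable (fun p : Nat.Primes =>
      (((p : ℕ) : ℝ) ^ t / (((p : ℕ) : ℝ) ^ s - 1 + ((p : ℕ) : ℝ) ^ t)) *
      Real.log ((p : ℕ) : ℝ)) := by
  have h1 : (1:ℝ) < s - t := by linarith
  have hmaj : Summable (fun p : Nat.Primes =>
      2 * (Real.log ((p:ℕ):ℝ) / ((p:ℕ):ℝ) ^ (s - t))) :=
    (summable_primes_log h1).mul_left 2
  apply hmaj.of_nonneg_of_le
  · intro p
    have hP2 : (2:ℝ) ≤ ((p:ℕ):ℝ) := by exact_mod_cast p.2.two_le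
    have h2 := hPs2 ht hs hP2
    have hpt : (0:ℝ) < ((p:ℕ):ℝ) ^ t := Real.rpow_pos_of_pos (by linarith) t
    apply mul_nonneg ?_ (Real.log_natCast_nonneg _)
    apply div_nonneg hpt.le; linarith
  · intro p
    have hP2 : (2:ℝ) ≤ ((p:ℕ):ℝ) := by exact_mod_cast p.2.two_le
    set P : ℝ := ((p:ℕ):ℝ) with hP
    have h2 := hPs2 ht hs hP2
    have hpt : (0:ℝ) < P ^ t := Real.rpow_pos_of_pos (by linarith) t
    have hlog : 0 ≤ Real.log P := Real.log_natCast_nonneg _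
    have hb2 := bound2 ht hs hP2
    have hsplit : P ^ t / P ^ s = 1 / P ^ (s - t) := by
      rw [Real.rpow_sub (by linarith : (0:ℝ) < P), one_div_div]
    calc P ^ t / (P ^ s - 1 + P ^ t) * Real.log P
        ≤ 2 * (P ^ t / P ^ s) * Real.log P := mul_le_mul_of_nonneg_right hb2 hlog
      _ = 2 * (Real.log P / P ^ (s - t)) := by rw [hsplit]; ring


lemma fact_pk_mul {p : ℕ} (hp : p.Prime) (k : ℕ) (m : ℕ) (hm0 : m ≠ 0) (hm : ¬ p ∣ m) :
    (p ^ k * m).factorization p = k := by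
  rw [Nat.factorization_mul (pow_ne_zero k hp.pos.ne') hm0]
  rw [Finsupp.add_apply, hp.factorization_pow, Finsupp.single_eq_same,
    Nat.factorization_eq_zero_of_not_dvd hm, add_zero]

/-- The bijection `(k, m) ↦ p^k * m` between `ℕ × {m // ¬ p ∣ m}` and `ℕ+`. -/
def pEquiv (p : ℕ) (hp : p.Prime) : ℕ × {m : ℕ+ // ¬ p ∣ (m : ℕ)} ≃ ℕ+ where
  toFun x := ⟨p ^ x.1 * ((x.2 : ℕ+) : ℕ), Nat.mul_pos (pow_pos hp.pos _) (x.2 : ℕ+).pos⟩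
  invFun n := ⟨(n : ℕ).factorization p,
    ⟨⟨(n : ℕ) / p ^ ((n : ℕ).factorization p), Nat.ordCompl_pos p n.ne_zero⟩,
      Nat.not_dvd_ordCompl hp n.ne_zero⟩⟩
  left_inv := by
    rintro ⟨k, m, hm⟩
    have h1 : (p ^ k * (m : ℕ)).factorization p = k := fact_pk_mul hp k m m.ne_zero hm
    have h2 : p ^ k * (m : ℕ) / p ^ ((p ^ k * (m : ℕ)).factorization p) = (m : ℕ) := by
      rw [h1]; exact Nat.mul_div_cancel_left _ (pow_pos hp.pos k)
    exact Prod.ext h1 (Subtype.ext (PNat.coe_injective h2))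
  right_inv := by
    intro n
    exact PNat.coe_injective (Nat.ordProj_mul_ordCompl_eq_self (n : ℕ) p)

lemma rad_mul {a b : ℕ} (ha : a ≠ 0) (hb : b ≠ 0) (hab : Nat.Coprime a b) :
    rad (a * b) = rad a * rad b := by
  unfold rad
  rw [Nat.primeFactors_mul ha hb, Finset.prod_union hab.disjoint_primeFactors]

/-- The Euler-factor coefficients. -/
noncomputable def cfac (s t : ℝ) (p : ℕ) (k : ℕ) : ℝ :=
  ((rad (p ^ k) : ℕ) : ℝ) ^ t * (((p : ℝ) ^ s)⁻¹) ^ k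

lemma cfac_zero {s t : ℝ} {p : ℕ} : cfac s t p 0 = 1 := by
  simp [cfac, rad]

lemma rad_prime_pow {p : ℕ} (hp : p.Prime) {k : ℕ} (hk : k ≠ 0) : rad (p ^ k) = p := by
  unfold rad
  rw [Nat.primeFactors_prime_pow hk hp, Finset.prod_singleton]

lemma cfac_of_ne {s t : ℝ} {p : ℕ} (hp : p.Prime) {k : ℕ} (hk : k ≠ 0) :
    cfac s t p k = (p : ℝ) ^ t * (((p : ℝ) ^ s)⁻¹) ^ k := by
  unfold cfac
  rw [rad_prime_pow hp hk]

lemma cfac_nonneg {s t : ℝ} {p : ℕ} {k : ℕ} : 0 ≤ cfac s t p k := by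
  unfold cfac; positivity

lemma w_pk_mul {s t : ℝ} {p : ℕ} (hp : p.Prime) {k : ℕ} {m : ℕ+} (hm : ¬ p ∣ (m : ℕ))
    {N : ℕ+} (hN : (N : ℕ) = p ^ k * (m : ℕ)) :
    w s t N = cfac s t p k * w s t m := by
  have hP0 : (0:ℝ) < (p:ℝ) := by exact_mod_cast hp.pos
  have hcop : Nat.Coprime (p ^ k) (m : ℕ) :=
    Nat.Coprime.pow_left _ (hp.coprime_iff_not_dvd.mpr hm)
  have hrad : rad (p ^ k * (m : ℕ)) = rad (p ^ k) * rad (m : ℕ) :=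
    rad_mul (pow_ne_zero _ hp.pos.ne') m.ne_zero hcop
  have hpk : ((p:ℝ) ^ (k:ℕ)) ^ s = ((p : ℝ) ^ s) ^ k := by
    rw [← Real.rpow_natCast (p:ℝ) k, ← Real.rpow_mul hP0.le, mul_comm,
      Real.rpow_mul hP0.le, Real.rpow_natCast]
  have hm0 : (0:ℝ) < ((m:ℕ):ℝ) := by exact_mod_cast m.pos
  have hradm : (0:ℝ) < ((rad (m:ℕ) : ℕ):ℝ) := by exact_mod_cast rad_pos (m:ℕ)
  unfold w cfac
  rw [hN, hrad]
  push_cast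
  rw [Real.mul_rpow (by positivity) hradm.le, Real.mul_rpow (by positivity) hm0.le, hpk]
  have h1 : (((p:ℝ) ^ s) ^ k) ≠ 0 := by positivity
  have h2 : ((m:ℕ):ℝ) ^ s ≠ 0 := by positivity
  field_simp
  rw [one_div, inv_pow, mul_assoc, mul_inv_cancel₀ h1, mul_one]

section Geom

variable {s t : ℝ} {p : ℕ}

lemma cfac_le (hp : p.Prime) (k : ℕ) :
    cfac s t p k ≤ max 1 ((p:ℝ) ^ t) * (((p:ℝ) ^ s)⁻¹) ^ k := by
  rcases eq_or_ne k 0 with rfl | hk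
  · simp [cfac_zero]
  · rw [cfac_of_ne hp hk]
    have : (0:ℝ) ≤ (((p:ℝ) ^ s)⁻¹) ^ k := by positivity
    exact mul_le_mul_of_nonneg_right (le_max_right _ _) this

lemma x_mem (hps : 1 < (p:ℝ) ^ s) : (0:ℝ) ≤ ((p:ℝ) ^ s)⁻¹ ∧ ((p:ℝ) ^ s)⁻¹ < 1 := by
  constructor
  · positivity
  · rw [inv_lt_one_iff₀]; right; exact hps

lemma summable_cfac (hp : p.Prime) (hps : 1 < (p:ℝ) ^ s) : Summable (cfac s t p) := by
  obtain ⟨hx0, hx1⟩ := x_mem (s := s) (p := p) hps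
  exact Summable.of_nonneg_of_le (fun _ => cfac_nonneg) (cfac_le hp)
    ((summable_geometric_of_lt_one hx0 hx1).mul_left (max 1 ((p:ℝ) ^ t)))

lemma tsum_cfac (hp : p.Prime) (hps : 1 < (p:ℝ) ^ s) :
    ∑' k, cfac s t p k
      = 1 + ((p:ℝ) ^ t * ((p:ℝ) ^ s)⁻¹) * (1 - ((p:ℝ) ^ s)⁻¹)⁻¹ := by
  obtain ⟨hx0, hx1⟩ := x_mem (s := s) (p := p) hps
  rw [Summable.tsum_eq_zero_add (summable_cfac hp hps), cfac_zero]
  congr 1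
  have h1 : ∀ k : ℕ, cfac s t p (k + 1)
      = ((p:ℝ) ^ t * ((p:ℝ) ^ s)⁻¹) * (((p:ℝ) ^ s)⁻¹) ^ k := by
    intro k
    rw [cfac_of_ne hp k.succ_ne_zero, pow_succ]
    ring
  rw [tsum_congr h1, tsum_mul_left, tsum_geometric_of_lt_one hx0 hx1]

lemma summable_mul_cfac (hp : p.Prime) (hps : 1 < (p:ℝ) ^ s) :
    Summable (fun k : ℕ => (k : ℝ) * cfac s t p k) := by
  obtain ⟨hx0, hx1⟩ := x_mem (s := s) (p := p) hps
  have hx : ‖((p:ℝ) ^ s)⁻¹‖ < 1 := by rwa [Real.norm_eq_abs, abs_of_nonneg hx0]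
  have h := ((summable_pow_mul_geometric_of_norm_lt_one 1 hx).mul_left ((p:ℝ) ^ t))
  apply h.congr
  intro k
  rcases eq_or_ne k 0 with rfl | hk
  · simp
  · rw [cfac_of_ne hp hk, pow_one]
    ring

lemma tsum_mul_cfac (hp : p.Prime) (hps : 1 < (p:ℝ) ^ s) :
    ∑' k : ℕ, (k : ℝ) * cfac s t p k
      = (p:ℝ) ^ t * (((p:ℝ) ^ s)⁻¹ / (1 - ((p:ℝ) ^ s)⁻¹) ^ 2) := by
  obtain ⟨hx0, hx1⟩ := x_mem (s := s) (p := p) hps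
  have hx : ‖((p:ℝ) ^ s)⁻¹‖ < 1 := by rwa [Real.norm_eq_abs, abs_of_nonneg hx0]
  have h1 : ∀ k : ℕ, (k : ℝ) * cfac s t p k
      = (p:ℝ) ^ t * ((k : ℝ) * (((p:ℝ) ^ s)⁻¹) ^ k) := by
    intro k
    rcases eq_or_ne k 0 with rfl | hk
    · simp
    · rw [cfac_of_ne hp hk]; ring
  rw [tsum_congr h1, tsum_mul_left, tsum_coe_mul_geometric_of_norm_lt_one hx]

lemma summable_ind_cfac (hp : p.Prime) (hps : 1 < (p:ℝ) ^ s) :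
    Summable (fun k : ℕ => (if k = 0 then (0:ℝ) else 1) * cfac s t p k) := by
  apply (summable_cfac (s := s) (t := t) hp hps).of_nonneg_of_le
  · intro k
    rcases eq_or_ne k 0 with rfl | hk
    · simp
    · simp [hk, cfac_nonneg]
  · intro k
    rcases eq_or_ne k 0 with rfl | hk
    · simp [cfac_zero]
    · simp [hk]

lemma tsum_ind_cfac (hp : p.Prime) (hps : 1 < (p:ℝ) ^ s) :
    ∑' k, (if k = 0 then (0:ℝ) else 1) * cfac s t p k
      = ((p:ℝ) ^ t * ((p:ℝ) ^ s)⁻¹) * (1 - ((p:ℝ) ^ s)⁻¹)⁻¹ := by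
  obtain ⟨hx0, hx1⟩ := x_mem (s := s) (p := p) hps
  rw [Summable.tsum_eq_zero_add (summable_ind_cfac hp hps)]
  have h1 : ∀ k : ℕ, (if k + 1 = 0 then (0:ℝ) else 1) * cfac s t p (k + 1)
      = ((p:ℝ) ^ t * ((p:ℝ) ^ s)⁻¹) * (((p:ℝ) ^ s)⁻¹) ^ k := by
    intro k
    rw [if_neg k.succ_ne_zero, one_mul, cfac_of_ne hp k.succ_ne_zero, pow_succ]
    ring
  rw [tsum_congr h1, tsum_mul_left, tsum_geometric_of_lt_one hx0 hx1]
  simp [cfac_zero]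

end Geom

lemma tsum_factor {s t : ℝ} (ht : 0 < t) (hs : 1 + t < s) {p : ℕ} (hp : p.Prime)
    (a : ℕ → ℝ) (ha0 : ∀ k, 0 ≤ a k)
    (hac : Summable (fun k => a k * cfac s t p k)) :
    Summable (fun n : ℕ+ => a ((n : ℕ).factorization p) * w s t n) ∧
    ∑' n : ℕ+, a ((n : ℕ).factorization p) * w s t n
      = (∑' k : ℕ, a k * cfac s t p k) *
        ∑' m : {m : ℕ+ // ¬ p ∣ (m : ℕ)}, w s t (m : ℕ+) := by
  set e := pEquiv p hp with he
  set F : ℕ+ → ℝ := fun n => a ((n : ℕ).factorization p) * w s t n with hF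
  have hcomp : ∀ x : ℕ × {m : ℕ+ // ¬ p ∣ (m : ℕ)},
      F (e x) = (a x.1 * cfac s t p x.1) * w s t (x.2 : ℕ+) := by
    rintro ⟨k, m, hm⟩
    have hval : ((e (k, ⟨m, hm⟩) : ℕ+) : ℕ) = p ^ k * (m : ℕ) := rfl
    have hfac : ((e (k, ⟨m, hm⟩) : ℕ+) : ℕ).factorization p = k := by
      rw [hval]; exact fact_pk_mul hp k m m.ne_zero hm
    show a (((e (k, ⟨m, hm⟩) : ℕ+) : ℕ).factorization p) * w s t (e (k, ⟨m, hm⟩)) = _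
    rw [hfac, w_pk_mul hp hm hval]
    ring
  have hwsub : Summable (fun m : {m : ℕ+ // ¬ p ∣ (m : ℕ)} => w s t (m : ℕ+)) :=
    (summable_w ht hs).subtype {m : ℕ+ | ¬ p ∣ (m : ℕ)}
  have hprod : Summable (fun x : ℕ × {m : ℕ+ // ¬ p ∣ (m : ℕ)} =>
      (a x.1 * cfac s t p x.1) * w s t (x.2 : ℕ+)) := by
    apply Summable.mul_of_nonneg hac hwsub
    · intro k; exact mul_nonneg (ha0 k) cfac_nonneg
    · intro m; exact (w_pos s t _).le
  have hFsum : Summable F := by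
    rw [← e.summable_iff]
    exact hprod.congr (fun x => (hcomp x).symm)
  refine ⟨hFsum, ?_⟩
  calc ∑' n : ℕ+, F n = ∑' x, F (e x) := (e.tsum_eq F).symm
    _ = ∑' x : ℕ × {m : ℕ+ // ¬ p ∣ (m : ℕ)},
          (a x.1 * cfac s t p x.1) * w s t (x.2 : ℕ+) := tsum_congr hcomp
    _ = ∑' k : ℕ, ∑' m : {m : ℕ+ // ¬ p ∣ (m : ℕ)},
          (a k * cfac s t p k) * w s t (m : ℕ+) := Summable.tsum_prod hprod
    _ = ∑' k : ℕ, (a k * cfac s t p k) * ∑' m : {m : ℕ+ // ¬ p ∣ (m : ℕ)},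
          w s t (m : ℕ+) := tsum_congr (fun k => tsum_mul_left)
    _ = _ := tsum_mul_right

lemma hps_one_lt {s t : ℝ} (ht : 0 < t) (hs : 1 + t < s) {p : ℕ} (hp : p.Prime) :
    1 < (p : ℝ) ^ s := by
  have hP2 : (2:ℝ) ≤ (p:ℝ) := by exact_mod_cast hp.two_le
  have := hPs2 ht hs hP2
  linarith

/-- `F = E₀ · G` specialization: the plain sum of `w`. -/
lemma F_eq_E0_G {s t : ℝ} (ht : 0 < t) (hs : 1 + t < s) {p : ℕ} (hp : p.Prime) :
    ∑' n : ℕ+, w s t n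
      = (1 + ((p:ℝ) ^ t * ((p:ℝ) ^ s)⁻¹) * (1 - ((p:ℝ) ^ s)⁻¹)⁻¹) *
        ∑' m : {m : ℕ+ // ¬ p ∣ (m : ℕ)}, w s t (m : ℕ+) := by
  have hps := hps_one_lt ht hs hp
  have h := tsum_factor ht hs hp (fun _ => 1) (fun _ => zero_le_one)
    ((summable_cfac hp hps).congr (fun k => (one_mul _).symm))
  have h2 : ∑' n : ℕ+, w s t n = ∑' n : ℕ+, (1:ℝ) * w s t n :=
    tsum_congr (fun n => (one_mul _).symm)
  rw [h2, h.2]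
  congr 1
  rw [← tsum_cfac hp hps]
  exact tsum_congr (fun k => one_mul _)

lemma V_eq {s t : ℝ} (ht : 0 < t) (hs : 1 + t < s) {p : ℕ} (hp : p.Prime) :
    Summable (fun n : ℕ+ => (((n : ℕ).factorization p : ℕ) : ℝ) * w s t n) ∧
    ∑' n : ℕ+, (((n : ℕ).factorization p : ℕ) : ℝ) * w s t n
      = ((p:ℝ) ^ s / ((p:ℝ) ^ s - 1)) * ((p:ℝ) ^ t / ((p:ℝ) ^ s - 1 + (p:ℝ) ^ t)) *
        ∑' n : ℕ+, w s t n := by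
  have hps := hps_one_lt ht hs hp
  have hP0 : (0:ℝ) < (p:ℝ) := by exact_mod_cast hp.pos
  have hpt : (0:ℝ) < (p:ℝ) ^ t := Real.rpow_pos_of_pos hP0 t
  have h := tsum_factor ht hs hp (fun k => (k : ℝ)) (fun k => Nat.cast_nonneg k)
    (summable_mul_cfac hp hps)
  refine ⟨h.1, ?_⟩
  rw [h.2, tsum_mul_cfac hp hps, F_eq_E0_G ht hs hp]
  have hx1 : ((p:ℝ) ^ s)⁻¹ < 1 := (x_mem hps).2
  have hne1 : (1:ℝ) - ((p:ℝ) ^ s)⁻¹ ≠ 0 := by linarith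
  have hne2 : ((p:ℝ) ^ s) ≠ 0 := by positivity
  have hne3 : ((p:ℝ) ^ s) - 1 ≠ 0 := by linarith
  have hne4 : ((p:ℝ) ^ s) - 1 + (p:ℝ) ^ t ≠ 0 := ne_of_gt (by linarith)
  rw [← mul_assoc]
  congr 1
  field_simp

lemma W_eq {s t : ℝ} (ht : 0 < t) (hs : 1 + t < s) {p : ℕ} (hp : p.Prime) :
    Summable (fun n : ℕ+ =>
      (if (n : ℕ).factorization p = 0 then (0:ℝ) else 1) * w s t n) ∧
    ∑' n : ℕ+, (if (n : ℕ).factorization p = 0 then (0:ℝ) else 1) * w s t n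
      = ((p:ℝ) ^ t / ((p:ℝ) ^ s - 1 + (p:ℝ) ^ t)) * ∑' n : ℕ+, w s t n := by
  have hps := hps_one_lt ht hs hp
  have hP0 : (0:ℝ) < (p:ℝ) := by exact_mod_cast hp.pos
  have hpt : (0:ℝ) < (p:ℝ) ^ t := Real.rpow_pos_of_pos hP0 t
  have h := tsum_factor ht hs hp (fun k => if k = 0 then (0:ℝ) else 1)
    (fun k => by by_cases h : k = 0 <;> simp [h]) (summable_ind_cfac hp hps)
  refine ⟨h.1, ?_⟩
  rw [h.2, tsum_ind_cfac hp hps, F_eq_E0_G ht hs hp]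
  have hx1 : ((p:ℝ) ^ s)⁻¹ < 1 := (x_mem hps).2
  have hne1 : (1:ℝ) - ((p:ℝ) ^ s)⁻¹ ≠ 0 := by linarith
  have hne2 : ((p:ℝ) ^ s) ≠ 0 := by positivity
  have hne3 : ((p:ℝ) ^ s) - 1 ≠ 0 := by linarith
  have hne4 : ((p:ℝ) ^ s) - 1 + (p:ℝ) ^ t ≠ 0 := ne_of_gt (by linarith)
  rw [← mul_assoc]
  congr 1
  field_simp

lemma tsum_primes_aux (n : ℕ+) (f : Nat.Primes → ℝ)
    (hf : ∀ P : Nat.Primes, (n : ℕ).factorization (P : ℕ) = 0 → f P = 0) :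
    Summable f ∧ ∑' P : Nat.Primes, f P
      = ∑ q ∈ (n : ℕ).primeFactors.attach, f ⟨q.1, Nat.prime_of_mem_primeFactors q.2⟩ := by
  classical
  set emb : {q // q ∈ (n : ℕ).primeFactors} ↪ Nat.Primes :=
    ⟨fun q => ⟨q.1, Nat.prime_of_mem_primeFactors q.2⟩,
      fun a b h => Subtype.ext (congrArg (fun P : Nat.Primes => (P : ℕ)) h)⟩ with hemb
  have hzero : ∀ P ∉ (n : ℕ).primeFactors.attach.map emb, f P = 0 := by
    intro P hP
    apply hf
    by_contra hv
    have hmem : (P : ℕ) ∈ (n : ℕ).primeFactors := by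
      rw [← Nat.support_factorization]; exact Finsupp.mem_support_iff.mpr hv
    exact hP (Finset.mem_map.mpr ⟨⟨(P : ℕ), hmem⟩, Finset.mem_attach _ _, Subtype.ext rfl⟩)
  refine ⟨summable_of_ne_finset_zero hzero, ?_⟩
  rw [tsum_eq_sum hzero, Finset.sum_map]
  rfl

lemma log_eq_sum (n : ℕ+) :
    Real.log ((n : ℕ) : ℝ)
      = ∑ q ∈ (n : ℕ).primeFactors,
          (((n : ℕ).factorization q : ℕ) : ℝ) * Real.log (q : ℝ) := by
  conv_lhs => rw [← Nat.factorization_prod_pow_eq_self n.ne_zero]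
  rw [Finsupp.prod]
  push_cast
  rw [Real.log_prod]
  · rw [Nat.support_factorization]
    exact Finset.sum_congr rfl (fun q _ => Real.log_pow _ _)
  · intro q hq
    have hq' : q.Prime := Nat.prime_of_mem_primeFactors (by rwa [Nat.support_factorization] at hq)
    exact pow_ne_zero _ (by exact_mod_cast hq'.pos.ne')

lemma log_rad_eq_sum (n : ℕ+) :
    Real.log ((rad (n : ℕ) : ℕ) : ℝ)
      = ∑ q ∈ (n : ℕ).primeFactors, Real.log (q : ℝ) := by
  unfold rad
  push_cast
  rw [Real.log_prod]
  intro q hq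
  have hq' : q.Prime := Nat.prime_of_mem_primeFactors hq
  exact_mod_cast hq'.pos.ne'

lemma tsum_v_log (n : ℕ+) :
    Summable (fun P : Nat.Primes =>
      (((n : ℕ).factorization (P : ℕ) : ℕ) : ℝ) * Real.log ((P : ℕ) : ℝ)) ∧
    ∑' P : Nat.Primes, (((n : ℕ).factorization (P : ℕ) : ℕ) : ℝ) * Real.log ((P : ℕ) : ℝ)
      = Real.log ((n : ℕ) : ℝ) := by
  have h := tsum_primes_aux n
    (fun P => (((n : ℕ).factorization (P : ℕ) : ℕ) : ℝ) * Real.log ((P : ℕ) : ℝ))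
    (fun P hP => by simp [hP])
  refine ⟨h.1, ?_⟩
  rw [h.2, log_eq_sum n]
  exact Finset.sum_attach _ (fun q => (((n : ℕ).factorization q : ℕ) : ℝ) * Real.log (q : ℝ))

lemma tsum_ind_log (n : ℕ+) :
    Summable (fun P : Nat.Primes =>
      (if (n : ℕ).factorization (P : ℕ) = 0 then (0:ℝ) else 1) * Real.log ((P : ℕ) : ℝ)) ∧
    ∑' P : Nat.Primes,
        (if (n : ℕ).factorization (P : ℕ) = 0 then (0:ℝ) else 1) * Real.log ((P : ℕ) : ℝ)
      = Real.log ((rad (n : ℕ) : ℕ) : ℝ) := by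
  have h := tsum_primes_aux n
    (fun P => (if (n : ℕ).factorization (P : ℕ) = 0 then (0:ℝ) else 1) * Real.log ((P : ℕ) : ℝ))
    (fun P hP => by simp [hP])
  refine ⟨h.1, ?_⟩
  rw [h.2, log_rad_eq_sum n]
  rw [Finset.sum_attach _ (fun q => (if (n : ℕ).factorization q = 0 then (0:ℝ) else 1) * Real.log (q : ℝ))]
  apply Finset.sum_congr rfl
  intro q hq
  have : (n : ℕ).factorization q ≠ 0 := by
    rw [← Finsupp.mem_support_iff, Nat.support_factorization]; exact hq
  rw [if_neg this, one_mul]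

lemma Sigma2_eq {s t : ℝ} (ht : 0 < t) (hs : 1 + t < s) :
    ∑' n : ℕ+, Real.log ((n : ℕ) : ℝ) * w s t n = (∑' n : ℕ+, w s t n) * S s t := by
  set Fv : ℝ := ∑' n : ℕ+, w s t n with hFv
  set g : Nat.Primes → ℕ+ → ℝ := fun P n =>
    (((n : ℕ).factorization (P : ℕ) : ℕ) : ℝ) * Real.log ((P : ℕ) : ℝ) * w s t n with hg
  have hslice : ∀ P : Nat.Primes, Summable (fun n => g P n) := by
    intro P
    have := ((V_eq ht hs P.2).1.mul_left (Real.log ((P : ℕ) : ℝ)))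
    exact this.congr (fun n => by rw [hg]; ring)
  have hslice_tsum : ∀ P : Nat.Primes, ∑' n : ℕ+, g P n
      = (((P:ℕ):ℝ) ^ s / (((P:ℕ):ℝ) ^ s - 1)) * (((P:ℕ):ℝ) ^ t / (((P:ℕ):ℝ) ^ s - 1 + ((P:ℕ):ℝ) ^ t)) *
        Real.log ((P : ℕ) : ℝ) * Fv := by
    intro P
    have h1 : (fun n : ℕ+ => g P n)
        = fun n : ℕ+ => Real.log ((P : ℕ) : ℝ) * ((((n : ℕ).factorization (P : ℕ) : ℕ) : ℝ) * w s t n) :=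
      funext (fun n => by rw [hg]; ring)
    rw [h1, tsum_mul_left, (V_eq ht hs P.2).2, ← hFv]
    ring
  have houter : Summable (fun P : Nat.Primes => ∑' n : ℕ+, g P n) := by
    apply ((summable_S_summand ht hs).mul_right Fv).congr
    intro P
    rw [hslice_tsum P]
  have hprod : Summable (Function.uncurry g) := by
    rw [summable_prod_of_nonneg]
    · exact ⟨hslice, houter⟩
    · intro x
      exact mul_nonneg (mul_nonneg (Nat.cast_nonneg _) (Real.log_natCast_nonneg _)) (w_pos s t _).le
  have hswap := Summable.tsum_comm (f := g) hprod
  have hinner : ∀ n : ℕ+, ∑' P : Nat.Primes, g P n = Real.log ((n : ℕ) : ℝ) * w s t n := by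
    intro n
    rw [hg]
    simp only
    rw [tsum_mul_right, (tsum_v_log n).2]
  calc ∑' n : ℕ+, Real.log ((n : ℕ) : ℝ) * w s t n
      = ∑' n : ℕ+, ∑' P : Nat.Primes, g P n := (tsum_congr hinner).symm
    _ = ∑' P : Nat.Primes, ∑' n : ℕ+, g P n := hswap
    _ = ∑' P : Nat.Primes, Fv * ((((P:ℕ):ℝ) ^ s / (((P:ℕ):ℝ) ^ s - 1)) *
          (((P:ℕ):ℝ) ^ t / (((P:ℕ):ℝ) ^ s - 1 + ((P:ℕ):ℝ) ^ t)) * Real.log ((P : ℕ) : ℝ)) := by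
        apply tsum_congr
        intro P
        rw [hslice_tsum P]
        ring
    _ = Fv * S s t := by rw [tsum_mul_left]; rfl

lemma Sigma1_eq {s t : ℝ} (ht : 0 < t) (hs : 1 + t < s) :
    ∑' n : ℕ+, Real.log ((rad (n : ℕ) : ℕ) : ℝ) * w s t n
      = (∑' n : ℕ+, w s t n) * T s t := by
  set Fv : ℝ := ∑' n : ℕ+, w s t n with hFv
  set g : Nat.Primes → ℕ+ → ℝ := fun P n =>
    (if (n : ℕ).factorization (P : ℕ) = 0 then (0:ℝ) else 1) * Real.log ((P : ℕ) : ℝ) * w s t n with hg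
  have hslice : ∀ P : Nat.Primes, Summable (fun n => g P n) := by
    intro P
    have := ((W_eq ht hs P.2).1.mul_left (Real.log ((P : ℕ) : ℝ)))
    exact this.congr (fun n => by rw [hg]; ring)
  have hslice_tsum : ∀ P : Nat.Primes, ∑' n : ℕ+, g P n
      = (((P:ℕ):ℝ) ^ t / (((P:ℕ):ℝ) ^ s - 1 + ((P:ℕ):ℝ) ^ t)) *
        Real.log ((P : ℕ) : ℝ) * Fv := by
    intro P
    have h1 : (fun n : ℕ+ => g P n)
        = fun n : ℕ+ => Real.log ((P : ℕ) : ℝ) *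
            ((if (n : ℕ).factorization (P : ℕ) = 0 then (0:ℝ) else 1) * w s t n) :=
      funext (fun n => by rw [hg]; ring)
    rw [h1, tsum_mul_left, (W_eq ht hs P.2).2, ← hFv]
    ring
  have houter : Summable (fun P : Nat.Primes => ∑' n : ℕ+, g P n) := by
    apply ((summable_T_summand ht hs).mul_right Fv).congr
    intro P
    rw [hslice_tsum P]
  have hprod : Summable (Function.uncurry g) := by
    rw [summable_prod_of_nonneg]
    · exact ⟨hslice, houter⟩
    · intro x
      refine mul_nonneg (mul_nonneg ?_ (Real.log_natCast_nonneg _)) (w_pos s t _).le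
      split <;> norm_num
  have hswap := Summable.tsum_comm (f := g) hprod
  have hinner : ∀ n : ℕ+, ∑' P : Nat.Primes, g P n
      = Real.log ((rad (n : ℕ) : ℕ) : ℝ) * w s t n := by
    intro n
    rw [hg]
    simp only
    rw [tsum_mul_right, (tsum_ind_log n).2]
  calc ∑' n : ℕ+, Real.log ((rad (n : ℕ) : ℕ) : ℝ) * w s t n
      = ∑' n : ℕ+, ∑' P : Nat.Primes, g P n := (tsum_congr hinner).symm
    _ = ∑' P : Nat.Primes, ∑' n : ℕ+, g P n := hswap
    _ = ∑' P : Nat.Primes, Fv * ((((P:ℕ):ℝ) ^ t / (((P:ℕ):ℝ) ^ s - 1 + ((P:ℕ):ℝ) ^ t)) *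
          Real.log ((P : ℕ) : ℝ)) := by
        apply tsum_congr
        intro P
        rw [hslice_tsum P]
        ring
    _ = Fv * T s t := by rw [tsum_mul_left]; rfl

lemma summable_lograd_w {s t : ℝ} (ht : 0 < t) (hs : 1 + t < s) :
    Summable (fun n : ℕ+ => Real.log ((rad (n : ℕ) : ℕ) : ℝ) * w s t n) := by
  apply (summable_w_log ht hs).of_nonneg_of_le
  · intro n
    have h1 : (1:ℝ) ≤ ((rad (n : ℕ) : ℕ) : ℝ) := by exact_mod_cast rad_pos (n : ℕ)
    exact mul_nonneg (Real.log_nonneg h1) (w_pos s t n).le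
  · intro n
    apply mul_le_mul_of_nonneg_right ?_ (w_pos s t n).le
    apply Real.log_le_log (by exact_mod_cast rad_pos (n : ℕ))
    exact_mod_cast rad_le n.ne_zero

end Aux9

open Aux9

theorem stmt_9 (s t : ℝ) (ht : 0 < t) (hs : 1 + t < s) :
    Summable (fun n : {n : ℕ+ // T s t * Real.log (n : ℝ) < S s t * Real.log (rad n : ℝ)} =>
      ((rad (n : ℕ+) : ℝ) ^ t / ((n : ℕ+) : ℝ) ^ s) *
        (S s t * Real.log (rad (n : ℕ+) : ℝ) - T s t * Real.log ((n : ℕ+) : ℝ))) ∧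
    Summable (fun n : {n : ℕ+ // T s t * Real.log (n : ℝ) > S s t * Real.log (rad n : ℝ)} =>
      ((rad (n : ℕ+) : ℝ) ^ t / ((n : ℕ+) : ℝ) ^ s) *
        (T s t * Real.log ((n : ℕ+) : ℝ) - S s t * Real.log (rad (n : ℕ+) : ℝ))) ∧
    (∑' n : {n : ℕ+ // T s t * Real.log (n : ℝ) < S s t * Real.log (rad n : ℝ)},
        ((rad (n : ℕ+) : ℝ) ^ t / ((n : ℕ+) : ℝ) ^ s) *
          (S s t * Real.log (rad (n : ℕ+) : ℝ) - T s t * Real.log ((n : ℕ+) : ℝ))) =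
      ∑' n : {n : ℕ+ // T s t * Real.log (n : ℝ) > S s t * Real.log (rad n : ℝ)},
        ((rad (n : ℕ+) : ℝ) ^ t / ((n : ℕ+) : ℝ) ^ s) *
          (T s t * Real.log ((n : ℕ+) : ℝ) - S s t * Real.log (rad (n : ℕ+) : ℝ)) := by
  classical
  have hSig1 := summable_lograd_w ht hs
  have hSig2 := summable_w_log ht hs
  set f : ℕ+ → ℝ := fun n =>
    ((rad n : ℝ) ^ t / (n : ℝ) ^ s) *
      (S s t * Real.log (rad n : ℝ) - T s t * Real.log (n : ℝ)) with hfdef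
  have hfw : ∀ n : ℕ+, f n
      = S s t * (Real.log ((rad (n : ℕ) : ℕ) : ℝ) * w s t n)
        - T s t * (Real.log ((n : ℕ) : ℝ) * w s t n) := by
    intro n
    show ((rad (n:ℕ) : ℝ) ^ t / ((n:ℕ) : ℝ) ^ s) * _ = _
    unfold w
    ring
  have hfsum : Summable f := by
    apply Summable.congr ((hSig1.mul_left (S s t)).sub (hSig2.mul_left (T s t)))
    intro n
    rw [hfw n]
  have htsum0 : ∑' n : ℕ+, f n = 0 := by
    rw [tsum_congr hfw, Summable.tsum_sub ((hSig1).mul_left (S s t)) ((hSig2).mul_left (T s t)),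
      tsum_mul_left, tsum_mul_left, Sigma1_eq ht hs, Sigma2_eq ht hs]
    ring
  set A : Set ℕ+ := {n : ℕ+ | T s t * Real.log (n : ℝ) < S s t * Real.log (rad n : ℝ)} with hA
  set B : Set ℕ+ := {n : ℕ+ | T s t * Real.log (n : ℝ) > S s t * Real.log (rad n : ℝ)} with hB
  have hposf : ∀ n : ℕ+, n ∈ A → 0 < f n := by
    intro n hn
    exact mul_pos (w_pos s t n) (sub_pos.mpr hn)
  have hnegf : ∀ n : ℕ+, n ∈ B → f n < 0 := by
    intro n hn
    have : S s t * Real.log ((rad (n:ℕ):ℕ) : ℝ) - T s t * Real.log ((n:ℕ) : ℝ) < 0 :=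
      sub_neg.mpr hn
    exact mul_neg_of_pos_of_neg (w_pos s t n) this
  have hsplit : ∀ n : ℕ+, f n = A.indicator f n + B.indicator f n := by
    intro n
    by_cases hA1 : n ∈ A
    · have hB1 : n ∉ B := by
        intro hB1
        have h1 : T s t * Real.log (n : ℝ) < S s t * Real.log (rad n : ℝ) := hA1
        have h2 : S s t * Real.log (rad n : ℝ) < T s t * Real.log (n : ℝ) := hB1
        exact absurd h1 (lt_asymm h2)
      rw [Set.indicator_of_mem hA1, Set.indicator_of_notMem hB1, add_zero]
    · by_cases hB1 : n ∈ B
      · rw [Set.indicator_of_notMem hA1, Set.indicator_of_mem hB1, zero_add]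
      · have h2 : ¬ (T s t * Real.log (n : ℝ) < S s t * Real.log (rad n : ℝ)) := hA1
        have h3 : ¬ (S s t * Real.log (rad n : ℝ) < T s t * Real.log (n : ℝ)) := hB1
        have h1 : T s t * Real.log (n : ℝ) = S s t * Real.log (rad n : ℝ) :=
          le_antisymm (not_lt.mp h3) (not_lt.mp h2)
        rw [Set.indicator_of_notMem hA1, Set.indicator_of_notMem hB1, add_zero]
        show _ * (S s t * Real.log ((rad (n:ℕ):ℕ) : ℝ) - T s t * Real.log ((n:ℕ) : ℝ)) = 0
        rw [← h1, sub_self, mul_zero]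
  have hkey : ∑' x : A, f x = - ∑' x : B, f x := by
    have h1 : ∑' n : ℕ+, f n
        = (∑' n : ℕ+, A.indicator f n) + ∑' n : ℕ+, B.indicator f n := by
      rw [← Summable.tsum_add (hfsum.indicator A) (hfsum.indicator B)]
      exact tsum_congr hsplit
    have h2 := htsum0
    rw [h1] at h2
    rw [tsum_subtype A f, tsum_subtype B f]
    linarith
  refine ⟨?_, ?_, ?_⟩
  · exact hfsum.subtype A
  · apply (hfsum.neg.subtype B).congr
    intro n
    show -(f n.1) = _
    show -(((rad ((n.1:ℕ+):ℕ) : ℕ):ℝ) ^ t / (((n.1:ℕ+):ℕ) : ℝ) ^ s *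
      (S s t * Real.log ((rad ((n.1:ℕ+):ℕ):ℕ) : ℝ) - T s t * Real.log (((n.1:ℕ+):ℕ) : ℝ))) = _
    ring
  · calc (∑' n : {n : ℕ+ // T s t * Real.log (n : ℝ) < S s t * Real.log (rad n : ℝ)},
        ((rad (n : ℕ+) : ℝ) ^ t / ((n : ℕ+) : ℝ) ^ s) *
          (S s t * Real.log (rad (n : ℕ+) : ℝ) - T s t * Real.log ((n : ℕ+) : ℝ)))
        = ∑' x : A, f x := rfl
      _ = - ∑' x : B, f x := hkey
      _ = ∑' x : B, -(f (x : ℕ+)) := by rw [tsum_neg]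
      _ = _ := by
          apply tsum_congr
          intro x
          show -(((rad ((x:ℕ+):ℕ) : ℕ):ℝ) ^ t / (((x:ℕ+):ℕ) : ℝ) ^ s *
            (S s t * Real.log ((rad ((x:ℕ+):ℕ):ℕ) : ℝ) - T s t * Real.log (((x:ℕ+):ℕ) : ℝ))) = _
          ring
end

section
/- (Theorem 2) Let s and t be real numbers with t > 0 and s > 1 + t. If a and b are coprime positive integers and c = a + b satisfies T(s,t) · ln c < S(s,t) · ln R(c) (that is, c < R(c)^{S(s,t)/T(s,t)}), then a + b < R(a·b·c)^2. -/
open scoped BigOperators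

theorem stmt_11 (s t : ℝ) (ht : 0 < t) (hs : 1 + t < s)
    (a b c : ℕ) (ha : 0 < a) (hb : 0 < b) (hab : Nat.Coprime a b)
    (hc : c = a + b)
    (hbomb : T s t * Real.log (c : ℝ) < S s t * Real.log (rad c : ℝ)) :
    a + b < rad (a * b * c) ^ 2 := by
  classical
  set f : Nat.Primes → ℝ := fun p =>
    (((p : ℕ) : ℝ) ^ t / (((p : ℕ) : ℝ) ^ s - 1 + ((p : ℕ) : ℝ) ^ t)) *
      Real.log ((p : ℕ) : ℝ) with hf
  set g : Nat.Primes → ℝ := fun p =>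
    (((p : ℕ) : ℝ) ^ s / (((p : ℕ) : ℝ) ^ s - 1)) *
      (((p : ℕ) : ℝ) ^ t / (((p : ℕ) : ℝ) ^ s - 1 + ((p : ℕ) : ℝ) ^ t)) *
      Real.log ((p : ℕ) : ℝ) with hg
  have hT : T s t = ∑' p, f p := rfl
  have hS : S s t = ∑' p, g p := rfl
  have hfacts : ∀ p : Nat.Primes, 0 < f p ∧ f p ≤ g p ∧ g p ≤ 2 * f p := by
    intro p
    have hx : (2 : ℝ) ≤ ((p : ℕ) : ℝ) := by exact_mod_cast p.2.two_le
    have hx1 : (1 : ℝ) < ((p : ℕ) : ℝ) := by linarith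
    have hxs : (2 : ℝ) < ((p : ℕ) : ℝ) ^ s := by
      calc (2 : ℝ) ≤ ((p : ℕ) : ℝ) := hx
        _ = ((p : ℕ) : ℝ) ^ (1 : ℝ) := (Real.rpow_one _).symm
        _ < ((p : ℕ) : ℝ) ^ s := by
            exact (Real.rpow_lt_rpow_left_iff hx1).mpr (by linarith)
    have hxt : (0 : ℝ) < ((p : ℕ) : ℝ) ^ t := Real.rpow_pos_of_pos (by linarith) t
    have hlog : 0 < Real.log ((p : ℕ) : ℝ) := Real.log_pos hx1
    set x := ((p : ℕ) : ℝ) with hxdef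
    have hE : (0 : ℝ) < x ^ s - 1 + x ^ t := by linarith
    have hfpos : 0 < f p := mul_pos (div_pos hxt hE) hlog
    have hratio1 : 1 ≤ x ^ s / (x ^ s - 1) := by
      rw [le_div_iff₀ (by linarith)]; linarith
    have hratio2 : x ^ s / (x ^ s - 1) ≤ 2 := by
      rw [div_le_iff₀ (by linarith)]; linarith
    have hgf : g p = (x ^ s / (x ^ s - 1)) * f p := by
      simp only [hf, hg, mul_assoc]; rfl
    refine ⟨hfpos, ?_, ?_⟩
    · rw [hgf]; exact le_mul_of_one_le_left hfpos.le hratio1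
    · rw [hgf]; exact mul_le_mul_of_nonneg_right hratio2 hfpos.le
  by_cases hsum : Summable f
  · have hsg : Summable g :=
      Summable.of_nonneg_of_le (fun p => le_trans (hfacts p).1.le (hfacts p).2.1)
        (fun p => (hfacts p).2.2) (hsum.mul_left 2)
    have hTpos : 0 < T s t := by
      rw [hT]
      exact Summable.tsum_pos hsum (fun p => (hfacts p).1.le) ⟨2, Nat.prime_two⟩
        (hfacts ⟨2, Nat.prime_two⟩).1
    have hSle : S s t ≤ 2 * T s t := by
      rw [hS, hT, ← tsum_mul_left]
      exact Summable.tsum_le_tsum (fun p => (hfacts p).2.2) hsg (hsum.mul_left 2)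
    have hcpos : 0 < c := by omega
    have hradc_pos : 0 < rad c :=
      Finset.prod_pos fun p hp => (Nat.prime_of_mem_primeFactors hp).pos
    have hlogR : 0 ≤ Real.log ((rad c : ℕ) : ℝ) :=
      Real.log_nonneg (by exact_mod_cast hradc_pos)
    have h1 : Real.log (c : ℝ) < 2 * Real.log ((rad c : ℕ) : ℝ) := by
      have h2 := mul_le_mul_of_nonneg_right hSle hlogR
      nlinarith [hbomb, hTpos]
    have hcR : (0 : ℝ) < (c : ℝ) := by exact_mod_cast hcpos
    have hRR : (0 : ℝ) < ((rad c : ℕ) : ℝ) ^ 2 := by positivity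
    have h2 : (c : ℝ) < ((rad c : ℕ) : ℝ) ^ 2 := by
      rw [← Real.log_lt_log_iff hcR hRR, Real.log_pow]
      push_cast
      linarith
    have hnat : c < rad c ^ 2 := by exact_mod_cast h2
    have habc0 : a * b * c ≠ 0 := by positivity
    have hsub : c.primeFactors ⊆ (a * b * c).primeFactors :=
      Nat.primeFactors_mono (dvd_mul_left c (a * b)) habc0
    have hrle : rad c ≤ rad (a * b * c) :=
      Finset.prod_le_prod_of_subset_of_one_le' hsub
        (fun p hp _ => (Nat.prime_of_mem_primeFactors hp).one_lt.le)
    calc a + b = c := hc.symm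
      _ < rad c ^ 2 := hnat
      _ ≤ rad (a * b * c) ^ 2 := Nat.pow_le_pow_left hrle 2
  · have hsg : ¬ Summable g := fun h =>
      hsum (h.of_nonneg_of_le (fun p => (hfacts p).1.le) (fun p => (hfacts p).2.1))
    rw [hT, hS, tsum_eq_zero_of_not_summable hsum,
      tsum_eq_zero_of_not_summable hsg] at hbomb
    simp at hbomb
end
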